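/- arXiv:1503.07093 — 3 statements merged into one kernel-verified Lean document; each statement's English description precedes it below -/
import Mathlib

section
/- Hilbert space weak regularity lemma: Let K₁, K₂, … be arbitrary nonempty subsets of a real Hilbert space H. For every ε > 0 and f ∈ H there is an m ≤ 1/ε² and there are f_i ∈ K_i and γ_i ∈ ℝ for 1 ≤ i ≤ m such that for every g ∈ K_{m+1}, |⟨g, f − Σ_{i=1}^m γ_i f_i⟩| ≤ ε·‖f‖·‖g‖. -/
namespace NDT11

/-- **Hilbert space weak regularity lemma, Lovász–Szegedy.** Let `K₁, K₂, …`
be nonempty subsets of a real Hilbert space `H`. For every `ε > 0` and `f ∈ H` there are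
`m ≤ 1/ε²`, elements `fᵢ ∈ Kᵢ` and reals `γᵢ` (`1 ≤ i ≤ m`) such that for every
`g ∈ K_{m+1}`, `|⟨g, f − Σᵢ γᵢ fᵢ⟩| ≤ ε·‖f‖·‖g‖`. -/
theorem hilbert_weak_regularity {H : Type*} [NormedAddCommGroup H]
    [InnerProductSpace ℝ H] [CompleteSpace H]
    (K : ℕ → Set H) (hK : ∀ i, (K i).Nonempty) (ε : ℝ) (hε : 0 < ε) (f : H) :
    ∃ m : ℕ, (m : ℝ) ≤ 1 / ε^2 ∧
      ∃ (g : ℕ → H) (γ : ℕ → ℝ), (∀ i, 1 ≤ i → i ≤ m → g i ∈ K i) ∧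
        ∀ h ∈ K (m+1),
          |(inner ℝ h (f - ∑ i ∈ Finset.Icc 1 m, γ i • g i) : ℝ)| ≤ ε * ‖f‖ * ‖h‖ := by
  classical
  by_cases hf : f = 0
  · refine ⟨0, by push_cast; positivity, fun i => (hK i).some, fun _ => 0, by omega, ?_⟩
    intro h _
    simp [hf]
  have hf' : 0 < ‖f‖ := norm_pos_iff.mpr hf
  set Goal : Prop := ∃ m : ℕ, (m : ℝ) ≤ 1 / ε^2 ∧
      ∃ (g : ℕ → H) (γ : ℕ → ℝ), (∀ i, 1 ≤ i → i ≤ m → g i ∈ K i) ∧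
        ∀ h ∈ K (m+1),
          |(inner ℝ h (f - ∑ i ∈ Finset.Icc 1 m, γ i • g i) : ℝ)| ≤ ε * ‖f‖ * ‖h‖ with hGoal
  have key : ∀ n : ℕ, (∃ (g : ℕ → H) (γ : ℕ → ℝ),
      (∀ i, 1 ≤ i → i ≤ n → g i ∈ K i) ∧
      ‖f - ∑ i ∈ Finset.Icc 1 n, γ i • g i‖^2 ≤ ‖f‖^2 - n * (ε^2 * ‖f‖^2)) ∨ Goal := by
    intro n
    induction n with
    | zero =>
      left
      exact ⟨fun i => (hK i).some, fun _ => 0, by omega, by simp⟩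
    | succ n ih =>
      rcases ih with ⟨g, γ, hg, hbound⟩ | hgoal
      · set S : H := ∑ i ∈ Finset.Icc 1 n, γ i • g i with hS
        set r : H := f - S with hr
        by_cases hstop : ∀ h ∈ K (n+1), |(inner ℝ h r : ℝ)| ≤ ε * ‖f‖ * ‖h‖
        · right
          refine ⟨n, ?_, g, γ, hg, hstop⟩
          rw [le_div_iff₀ (by positivity)]
          nlinarith [sq_nonneg ‖r‖, mul_pos hf' hf']
        · left
          push_neg at hstop
          obtain ⟨h, hhK, hht⟩ := hstop
          set t : ℝ := inner ℝ h r with ht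
          have hh0 : h ≠ 0 := by
            rintro rfl
            have ht0 : t = 0 := by simp [ht]
            rw [ht0] at hht
            simp at hht
          have hn2 : (0:ℝ) < ‖h‖^2 := pow_pos (norm_pos_iff.mpr hh0) 2
          set c : ℝ := t / ‖h‖^2 with hc
          have hct : c * ‖h‖^2 = t := div_mul_cancel₀ t hn2.ne'
          refine ⟨Function.update g (n+1) h, Function.update γ (n+1) c, ?_, ?_⟩
          · intro i hi1 hi2
            rcases eq_or_ne i (n+1) with rfl | hne
            · simpa using hhK
            · rw [Function.update_of_ne hne]
              exact hg i hi1 (by omega)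
          · have hsum : ∑ i ∈ Finset.Icc 1 (n+1),
                (Function.update γ (n+1) c i) • (Function.update g (n+1) h i)
                = S + c • h := by
              rw [Finset.sum_Icc_succ_top (by omega : 1 ≤ n+1)]
              congr 1
              · rw [hS]
                apply Finset.sum_congr rfl
                intro i hi
                have : i ≠ n+1 := by
                  simp only [Finset.mem_Icc] at hi; omega
                rw [Function.update_of_ne this, Function.update_of_ne this]
              · simp
            rw [hsum]
            have hre : f - (S + c • h) = r - c • h := by rw [hr]; abel
            rw [hre]
            have hexp : ‖r - c • h‖^2 = ‖r‖^2 - 2 * (c * t) + c^2 * ‖h‖^2 := by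
              rw [norm_sub_sq_real, real_inner_smul_right, real_inner_comm, ← ht, norm_smul]
              rw [mul_pow, Real.norm_eq_abs, sq_abs]
            rw [hexp]
            have ht2 : ε^2 * ‖f‖^2 * ‖h‖^2 < t^2 := by
              have h1 : 0 ≤ ε * ‖f‖ * ‖h‖ := by positivity
              nlinarith [sq_abs t, abs_nonneg t]
            have hctge : ε^2 * ‖f‖^2 < c * t := by
              have htt : (c * t) * ‖h‖^2 = t^2 := by rw [← hct]; ring
              rw [← mul_lt_mul_iff_of_pos_right hn2, htt]
              linarith [ht2]
            have hcc : c^2 * ‖h‖^2 = c * t := by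
              rw [← hct]; ring
            push_cast
            nlinarith [hbound]
      · right; exact hgoal
  rcases key (Nat.floor (1/ε^2) + 1) with ⟨g, γ, hg, hbound⟩ | hgoal
  · exfalso
    set N : ℕ := Nat.floor (1/ε^2) + 1 with hN
    have h1 : (1:ℝ)/ε^2 < N := by
      rw [hN]; push_cast
      exact Nat.lt_floor_add_one _
    have h2 : 1 < (N:ℝ) * ε^2 := by
      rw [div_lt_iff₀ (by positivity)] at h1
      linarith
    nlinarith [sq_nonneg ‖f - ∑ i ∈ Finset.Icc 1 N, γ i • g i‖, norm_nonneg (f - ∑ i ∈ Finset.Icc 1 N, γ i • g i), mul_pos hf' hf']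
  · exact hgoal

end NDT11
end

section
/- Ground state energy reformulation of the partition-restricted cut norm: Let W be an r-kernel taking finitely many values {y₁,…,y_k}, regarded as a k-colored r-graphon with W^α = 1_{W=y_α}. Let A range over the set 𝔸 of r-arrays of size t with entries in {−1,1}, and let J_A^α = y_α·(A ⊗ B₀) where B₀ is the 0/1 r-array of size 2^r indexed by subsets of [r] with B₀(S₁,…,S_r)=1 iff j ∈ S_j for every j. Then max_{A∈𝔸} E_{r-1}(W, J_A) = sup_{Q: t_Q ≤ t} ‖W‖_{□,r,Q}, where the supremum runs over symmetric partitions Q of [0,1]^{H([r-1])} into at most t classes. -/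
open MeasureTheory

namespace NDT

/-- `HIdx q n`: the nonempty subsets of `[q] = Fin q` of cardinality at most `n`. -/
def HIdx (q n : ℕ) : Type := {S : Finset (Fin q) // S.Nonempty ∧ S.card ≤ n}

instance (q n : ℕ) : Fintype (HIdx q n) := by unfold HIdx; infer_instance

/-- Index set `H([r], r-1)` for `r = n+1`. -/
abbrev Idx (n : ℕ) := HIdx (n+1) n

/-- Index set `H([r-1])` for `r = n+1` (all nonempty subsets of `Fin n`). -/
abbrev Jdx (n : ℕ) := HIdx n n

/-- The projection `p_{[r] \ {i}}` from `[0,1]^{H([r],r-1)}` to `[0,1]^{H([r-1])}`,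
identifying `[r] \ {i}` with `[r-1]` via the order isomorphism `Fin.succAbove i`. -/
def projFun (n : ℕ) (i : Fin (n+1)) (x : Idx n → ℝ) (T : Jdx n) : ℝ :=
  x ⟨T.1.map (Fin.succAboveEmb i), T.2.1.map, by
      rw [Finset.card_map]; exact T.2.2⟩

/-- Action of a permutation of `Fin q` on `HIdx q n`. -/
def permH (q n : ℕ) (π : Equiv.Perm (Fin q)) (S : HIdx q n) : HIdx q n :=
  ⟨S.1.image π, S.2.1.image π, by
    rw [Finset.card_image_of_injective _ π.injective]; exact S.2.2⟩

/-- An `r`-kernel (`r = n+1`) is symmetric if it is invariant under the coordinate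
permutations induced by permutations of `[r]`. -/
def SymKernel (n : ℕ) (W : (Idx n → ℝ) → ℝ) : Prop :=
  ∀ (π : Equiv.Perm (Fin (n+1))) (x : Idx n → ℝ),
    W (fun S => x (permH (n+1) n π S)) = W x

/-- A subset of `[0,1]^{H([q],n)}` satisfying the usual symmetries. -/
def SymSet (q n : ℕ) (A : Set (HIdx q n → ℝ)) : Prop :=
  ∀ (π : Equiv.Perm (Fin q)) (y : HIdx q n → ℝ),
    y ∈ A → (fun T => y (permH q n π T)) ∈ A

/-- The cube `[0,1]^{H([q],n)}`. -/
def box (q n : ℕ) : Set (HIdx q n → ℝ) := Set.univ.pi fun _ => Set.Icc 0 1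

/-- The cut norm `‖W‖_{□,r}` of an `r`-kernel, `r = n+1`. -/
noncomputable def cutNorm (n : ℕ) (W : (Idx n → ℝ) → ℝ) : ℝ :=
  sSup {v : ℝ | ∃ S : Fin (n+1) → Set (Jdx n → ℝ),
    (∀ i, MeasurableSet (S i) ∧ SymSet n n (S i)) ∧
    v = |∫ x in box (n+1) n ∩ ⋂ i, projFun n i ⁻¹' S i, W x|}

/-- A symmetric measurable partition of `[0,1]^{H([r-1])}` indexed by `ι`. -/
structure IsSymPartition (n : ℕ) {ι : Type} [Fintype ι] (P : ι → Set (Jdx n → ℝ)) : Prop where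
  meas : ∀ j, MeasurableSet (P j)
  symm : ∀ j, SymSet n n (P j)
  disj : ∀ j j', j ≠ j' → Disjoint (P j) (P j')
  cover : box n n ⊆ ⋃ j, P j

/-- The cut-`P`-norm `‖W‖_{□,r,P}` of an `r`-kernel, `r = n+1`. -/
noncomputable def cutPNorm (n : ℕ) {ι : Type} [Fintype ι] (P : ι → Set (Jdx n → ℝ))
    (W : (Idx n → ℝ) → ℝ) : ℝ :=
  sSup {v : ℝ | ∃ S : Fin (n+1) → Set (Jdx n → ℝ),
    (∀ i, MeasurableSet (S i) ∧ SymSet n n (S i)) ∧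
    v = ∑ j : Fin (n+1) → ι,
      |∫ x in box (n+1) n ∩ ⋂ i, projFun n i ⁻¹' (S i ∩ P (j i)), W x|}


open scoped Classical

/-- The graphon-level energy `E_{P,r-1}(W,J)` of a `k`-colored `r`-graphon (`r = n+1`) with
respect to arrays `J` indexed by a finite class set `ι` and a partition `P` indexed by `ι`. -/
noncomputable def genEnergy (n : ℕ) {ι : Type} [Fintype ι] (k : ℕ)
    (Wc : Fin k → (Idx n → ℝ) → ℝ) (J : Fin k → (Fin (n+1) → ι) → ℝ)
    (P : ι → Set (Jdx n → ℝ)) : ℝ :=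
  ∑ α, ∑ f : Fin (n+1) → ι, J α f *
    ∫ x in box (n+1) n ∩ ⋂ i, projFun n i ⁻¹' P (f i), Wc α x

/-- The graphon-level ground state energy: supremum of the energy over all symmetric
measurable partitions of `[0,1]^{H([r-1])}` indexed by `ι`. -/
noncomputable def gseG (n : ℕ) (ι : Type) [Fintype ι] (k : ℕ)
    (Wc : Fin k → (Idx n → ℝ) → ℝ) (J : Fin k → (Fin (n+1) → ι) → ℝ) : ℝ :=
  sSup {e : ℝ | ∃ P : ι → Set (Jdx n → ℝ), IsSymPartition n P ∧ e = genEnergy n k Wc J P}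

section
open MeasureTheory
variable {n : ℕ}

lemma measurable_projFun (n : ℕ) (i : Fin (n+1)) : Measurable (projFun n i) :=
  measurable_pi_lambda _ fun T => measurable_pi_apply _

lemma measurableSet_box (q n : ℕ) : MeasurableSet (box q n) :=
  MeasurableSet.univ_pi fun _ => measurableSet_Icc

lemma volume_box (q n : ℕ) : volume (box q n) = 1 := by
  rw [box, volume_pi_pi]
  simp [Real.volume_Icc]

lemma permH_inv (q n : ℕ) (π : Equiv.Perm (Fin q)) (T : HIdx q n) :
    permH q n π (permH q n π⁻¹ T) = T := by
  unfold HIdx at T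
  apply Subtype.ext
  simp only [permH, Finset.image_image]
  ext a
  simp

lemma SymSet.compl {q n : ℕ} {A : Set (HIdx q n → ℝ)} (hA : SymSet q n A) :
    SymSet q n Aᶜ := by
  intro π y hy hmem
  apply hy
  have := hA π⁻¹ _ hmem
  convert this using 1
  funext T
  simp [permH_inv]

lemma SymSet.inter {q n : ℕ} {A B : Set (HIdx q n → ℝ)} (hA : SymSet q n A)
    (hB : SymSet q n B) : SymSet q n (A ∩ B) := fun π y hy => ⟨hA π y hy.1, hB π y hy.2⟩

lemma SymSet.iInter {q n : ℕ} {ι : Sort*} {A : ι → Set (HIdx q n → ℝ)}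
    (hA : ∀ i, SymSet q n (A i)) : SymSet q n (⋂ i, A i) := by
  intro π y hy
  simp only [Set.mem_iInter] at hy ⊢
  exact fun i => hA i π y (hy i)

lemma SymSet.iUnion {q n : ℕ} {ι : Sort*} {A : ι → Set (HIdx q n → ℝ)}
    (hA : ∀ i, SymSet q n (A i)) : SymSet q n (⋃ i, A i) := by
  intro π y hy
  simp only [Set.mem_iUnion] at hy ⊢
  obtain ⟨i, hi⟩ := hy
  exact ⟨i, hA i π y hi⟩

lemma SymSet.empty {q n : ℕ} : SymSet q n (∅ : Set (HIdx q n → ℝ)) := fun _ _ h => h.elim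

lemma SymSet.box {q n : ℕ} : SymSet q n (box q n) := by
  intro π y hy T _
  exact hy _ (Set.mem_univ _)

end
section
open MeasureTheory
open scoped Classical ENNReal
variable {n : ℕ}

/-- The region in `[0,1]^{H([r],r-1)}` cut out by coordinate sets `R i`. -/
def region (n : ℕ) (R : Fin (n+1) → Set (Jdx n → ℝ)) : Set (Idx n → ℝ) :=
  box (n+1) n ∩ ⋂ i, projFun n i ⁻¹' R i

lemma measurableSet_region {R : Fin (n+1) → Set (Jdx n → ℝ)}
    (hR : ∀ i, MeasurableSet (R i)) : MeasurableSet (region n R) :=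
  (measurableSet_box _ _).inter
    (MeasurableSet.iInter fun i => measurable_projFun n i (hR i))

lemma volume_region_le {R : Fin (n+1) → Set (Jdx n → ℝ)} :
    volume (region n R) ≤ 1 := by
  rw [← volume_box (n+1) n]
  exact measure_mono Set.inter_subset_left

lemma integrableOn_region {f : (Idx n → ℝ) → ℝ} (hf : Measurable f) {M : ℝ}
    (hM : ∀ x, |f x| ≤ M) {R : Fin (n+1) → Set (Jdx n → ℝ)}
    (hR : ∀ i, MeasurableSet (R i)) : IntegrableOn f (region n R) := by
  have hfin : volume (region n R) < ⊤ := lt_of_le_of_lt volume_region_le (by norm_num)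
  refine Integrable.mono' (g := fun _ => M) ?_ ?_ ?_
  · exact integrableOn_const hfin.ne
  · exact hf.aestronglyMeasurable.restrict
  · exact Filter.Eventually.of_forall fun x => by simpa using hM x

lemma abs_setIntegral_region_le {f : (Idx n → ℝ) → ℝ} (hf : Measurable f) {M : ℝ}
    (hM0 : 0 ≤ M) (hM : ∀ x, |f x| ≤ M) {R : Fin (n+1) → Set (Jdx n → ℝ)} :
    |∫ x in region n R, f x| ≤ M := by
  have h : ‖∫ x in region n R, f x‖ ≤ M * (volume (region n R)).toReal :=
    norm_setIntegral_le_of_norm_le_const (μ := volume) (s := region n R)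
    (f := f) (C := M) (lt_of_le_of_lt volume_region_le (by norm_num))
    (fun x _ => by simpa using hM x)
  have h2 : (volume (region n R)).toReal ≤ 1 := by
    have := volume_region_le (n := n) (R := R)
    calc (volume (region n R)).toReal ≤ (1 : ℝ≥0∞).toReal :=
          ENNReal.toReal_mono (by norm_num) this
      _ = 1 := by simp
  have h3 : M * (volume (region n R)).toReal ≤ M := by nlinarith
  have h4 : |∫ x in region n R, f x| ≤ M * (volume (region n R)).toReal := by
    simpa using h
  linarith

lemma region_union_eq {ι : Type} [Fintype ι] (P : ι → Set (Jdx n → ℝ))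
    (F : Fin (n+1) → Finset ι) :
    region n (fun i => ⋃ c ∈ F i, P c)
      = ⋃ f ∈ Fintype.piFinset F, region n (fun i => P (f i)) := by
  ext x
  simp only [region, Set.mem_inter_iff, Set.mem_iInter, Set.mem_preimage,
    Set.mem_iUnion, Fintype.mem_piFinset, exists_prop]
  constructor
  · rintro ⟨hbox, h⟩
    choose c hc1 hc2 using h
    exact ⟨c, hc1, hbox, fun i => hc2 i⟩
  · rintro ⟨f, hf, hbox, h⟩
    exact ⟨hbox, fun i => ⟨f i, hf i, h i⟩⟩

lemma disjoint_region {R R' : Fin (n+1) → Set (Jdx n → ℝ)} (i : Fin (n+1))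
    (h : Disjoint (R i) (R' i)) : Disjoint (region n R) (region n R') := by
  refine Set.disjoint_left.2 fun x hx hx' => ?_
  have h1 : projFun n i x ∈ R i := by
    have := hx.2; rw [Set.mem_iInter] at this; exact this i
  have h2 : projFun n i x ∈ R' i := by
    have := hx'.2; rw [Set.mem_iInter] at this; exact this i
  exact Set.disjoint_left.1 h h1 h2

lemma setIntegral_region_union {ι : Type} [Fintype ι] {P : ι → Set (Jdx n → ℝ)}
    (hPm : ∀ c, MeasurableSet (P c))
    (hPd : ∀ c c', c ≠ c' → Disjoint (P c) (P c'))
    (F : Fin (n+1) → Finset ι) {f : (Idx n → ℝ) → ℝ} (hf : Measurable f) {M : ℝ}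
    (hM : ∀ x, |f x| ≤ M) :
    ∫ x in region n (fun i => ⋃ c ∈ F i, P c), f x
      = ∑ g ∈ Fintype.piFinset F, ∫ x in region n (fun i => P (g i)), f x := by
  rw [region_union_eq]
  refine integral_biUnion_finset (Fintype.piFinset F)
    (fun g _ => measurableSet_region fun i => hPm _) ?_
    (fun g _ => integrableOn_region hf hM fun i => hPm _)
  intro g hg g' hg' hne
  have : ∃ i, g i ≠ g' i := by
    by_contra h
    push_neg at h
    exact hne (funext h)
  obtain ⟨i, hi⟩ := this
  exact disjoint_region i (hPd _ _ hi)

lemma sum_indicator_eq {k : ℕ} {W : (Idx n → ℝ) → ℝ} (y : Fin k → ℝ)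
    (hy : Function.Injective y) (hval : ∀ x, ∃ α, W x = y α) (x : Idx n → ℝ) :
    ∑ α : Fin k, y α * (if W x = y α then (1:ℝ) else 0) = W x := by
  obtain ⟨α₀, h₀⟩ := hval x
  rw [Finset.sum_eq_single α₀]
  · simp [h₀]
  · intro α _ hne
    have : W x ≠ y α := fun h => hne (hy (h₀ ▸ h.symm))
    simp [this]
  · simp

lemma energy_collapse {ι : Type} [Fintype ι] {k : ℕ} {W : (Idx n → ℝ) → ℝ}
    (hWm : Measurable W) (y : Fin k → ℝ) (hy : Function.Injective y)
    (hval : ∀ x, ∃ α, W x = y α) (P : ι → Set (Jdx n → ℝ))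
    (hPm : ∀ c, MeasurableSet (P c)) (c : (Fin (n+1) → ι) → ℝ) :
    genEnergy n k (fun α x => if W x = y α then (1:ℝ) else 0)
        (fun α f => y α * c f) P
      = ∑ f : Fin (n+1) → ι, c f * ∫ x in region n (fun i => P (f i)), W x := by
  rw [genEnergy, Finset.sum_comm]
  simp only [show ∀ (f : Fin (n+1) → ι),
      (box (n+1) n ∩ ⋂ i, projFun n i ⁻¹' P (f i)) = region n (fun i => P (f i))
    from fun _ => rfl]
  refine Finset.sum_congr rfl fun f _ => ?_
  have hmeasR : ∀ i, MeasurableSet (P (f i)) := fun i => hPm _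
  have hind : ∀ α : Fin k,
      IntegrableOn (fun x => y α * (if W x = y α then (1:ℝ) else 0))
        (region n fun i => P (f i)) := by
    intro α
    refine integrableOn_region ?_ (M := |y α|) ?_ hmeasR
    · exact (measurable_const.mul
        (Measurable.ite (hWm (measurableSet_singleton (y α))) measurable_const
          measurable_const))
    · intro x
      by_cases h : W x = y α <;> simp [h, abs_nonneg]
  calc ∑ α : Fin k, (y α * c f) *
        ∫ x in region n (fun i => P (f i)),
          (if W x = y α then (1:ℝ) else 0)
      = c f * ∑ α : Fin k,
          ∫ x in region n (fun i => P (f i)), y α * (if W x = y α then (1:ℝ) else 0) := by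
        rw [Finset.mul_sum]
        refine Finset.sum_congr rfl fun α _ => ?_
        rw [integral_const_mul]
        show (y α * c f) * _ = c f * (y α * _)
        ring
    _ = c f * ∫ x in region n (fun i => P (f i)),
          ∑ α : Fin k, y α * (if W x = y α then (1:ℝ) else 0) := by
        rw [integral_finset_sum _ (fun α _ => hind α)]
    _ = c f * ∫ x in region n (fun i => P (f i)), W x := by
        congr 1
        refine setIntegral_congr_fun (measurableSet_region hmeasR) fun x _ => ?_
        exact sum_indicator_eq y hy hval x

end
section
open MeasureTheory
open scoped Classical ENNReal
variable {n : ℕ}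

lemma SymSet.biUnion {q n : ℕ} {ι : Type} {F : Finset ι} {P : ι → Set (HIdx q n → ℝ)}
    (h : ∀ c ∈ F, SymSet q n (P c)) : SymSet q n (⋃ c ∈ F, P c) := by
  intro π z hz
  simp only [Set.mem_iUnion, exists_prop] at hz ⊢
  obtain ⟨c, hc, hzc⟩ := hz
  exact ⟨c, hc, h c hc π z hzc⟩

lemma biUnion_inter_biUnion {ι : Type} {X : Type*} {P : ι → Set X}
    (hPd : ∀ c c', c ≠ c' → Disjoint (P c) (P c')) (F G : Finset ι) :
    ((⋃ c ∈ F, P c) ∩ ⋃ c ∈ G, P c) = ⋃ c ∈ F ∩ G, P c := by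
  ext x
  simp only [Set.mem_inter_iff, Set.mem_iUnion, exists_prop, Finset.mem_inter]
  constructor
  · rintro ⟨⟨c, hcF, hxc⟩, ⟨c', hc'G, hxc'⟩⟩
    have hcc : c = c' := by
      by_contra hne
      exact Set.disjoint_left.1 (hPd c c' hne) hxc hxc'
    exact ⟨c, ⟨hcF, hcc ▸ hc'G⟩, hxc⟩
  · rintro ⟨c, ⟨hcF, hcG⟩, hxc⟩
    exact ⟨⟨c, hcF, hxc⟩, ⟨c, hcG, hxc⟩⟩

/-- Collecting the cells attached to `(g i, E)` with `i ∈ E`. -/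
lemma sumE {t : ℕ} (P : Fin t × Finset (Fin (n+1)) → Set (Jdx n → ℝ))
    (hPm : ∀ c, MeasurableSet (P c)) (hPd : ∀ c c', c ≠ c' → Disjoint (P c) (P c'))
    {W : (Idx n → ℝ) → ℝ} (hWm : Measurable W) {M : ℝ} (hM : ∀ x, |W x| ≤ M)
    (g : Fin (n+1) → Fin t) (R : Fin (n+1) → Set (Jdx n → ℝ))
    (hR : ∀ i, R i = ⋃ c ∈ Finset.univ.filter
      (fun c : Fin t × Finset (Fin (n+1)) => c.1 = g i ∧ i ∈ c.2), P c) :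
    ∑ E ∈ Finset.univ.filter (fun E : Fin (n+1) → Finset (Fin (n+1)) => ∀ j, j ∈ E j),
      ∫ x in region n (fun i => P (g i, E i)), W x
    = ∫ x in region n R, W x := by
  have hRe : R = fun i => ⋃ c ∈ Finset.univ.filter
      (fun c : Fin t × Finset (Fin (n+1)) => c.1 = g i ∧ i ∈ c.2), P c := funext hR
  rw [hRe, setIntegral_region_union hPm hPd _ hWm hM]
  refine Finset.sum_nbij' (i := fun E => fun i => (g i, E i))
    (j := fun f => fun i => (f i).2) ?_ ?_ ?_ ?_ ?_
  · intro E hE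
    simp only [Finset.mem_filter, Finset.mem_univ, true_and] at hE
    simp only [Fintype.mem_piFinset, Finset.mem_filter, Finset.mem_univ, true_and]
    exact fun i => hE i
  · intro f hf
    simp only [Fintype.mem_piFinset, Finset.mem_filter, Finset.mem_univ, true_and] at hf
    simp only [Finset.mem_filter, Finset.mem_univ, true_and]
    exact fun i => (hf i).2
  · intro E _
    rfl
  · intro f hf
    simp only [Fintype.mem_piFinset, Finset.mem_filter, Finset.mem_univ, true_and] at hf
    funext i
    exact Prod.ext ((hf i).1.symm) rfl
  · intro E _
    rfl

def SS (n t : ℕ) (P : Fin t × Finset (Fin (n+1)) → Set (Jdx n → ℝ)) (i : Fin (n+1)) :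
    Set (Jdx n → ℝ) :=
  ⋃ c ∈ Finset.univ.filter (fun c : Fin t × Finset (Fin (n+1)) => i ∈ c.2), P c

def QQ (n t : ℕ) (P : Fin t × Finset (Fin (n+1)) → Set (Jdx n → ℝ)) (m : Fin t) :
    Set (Jdx n → ℝ) :=
  ⋃ c ∈ Finset.univ.filter (fun c : Fin t × Finset (Fin (n+1)) => c.1 = m), P c

/-- Key identity for the `≤` direction. -/
lemma key1 {t k : ℕ} {W : (Idx n → ℝ) → ℝ} (hWm : Measurable W)
    (y : Fin k → ℝ) (hy : Function.Injective y) (hval : ∀ x, ∃ α, W x = y α)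
    {M : ℝ} (hM : ∀ x, |W x| ≤ M)
    (A : (Fin (n+1) → Fin t) → ℝ)
    (P : Fin t × Finset (Fin (n+1)) → Set (Jdx n → ℝ))
    (hPm : ∀ c, MeasurableSet (P c)) (hPd : ∀ c c', c ≠ c' → Disjoint (P c) (P c')) :
    genEnergy n k (fun α x => if W x = y α then (1:ℝ) else 0)
        (fun α p => y α * A (fun j => (p j).1) *
          (if ∀ j, j ∈ (p j).2 then (1 : ℝ) else 0)) P
      = ∑ g : Fin (n+1) → Fin t, A g *
          ∫ x in region n (fun i => SS n t P i ∩ QQ n t P (g i)), W x := by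
  have e1 : genEnergy n k (fun α x => if W x = y α then (1:ℝ) else 0)
        (fun α p => y α * A (fun j => (p j).1) *
          (if ∀ j, j ∈ (p j).2 then (1 : ℝ) else 0)) P
      = genEnergy n k (fun α x => if W x = y α then (1:ℝ) else 0)
        (fun α p => y α * (A (fun j => (p j).1) *
          (if ∀ j, j ∈ (p j).2 then (1 : ℝ) else 0))) P := by
    unfold genEnergy
    refine Finset.sum_congr rfl fun α _ => Finset.sum_congr rfl fun f _ => ?_
    ring
  rw [e1, energy_collapse hWm y hy hval P hPm]
  rw [← Equiv.sum_comp
    (Equiv.arrowProdEquivProdArrow (Fin (n+1)) (fun _ => Fin t) (fun _ => Finset (Fin (n+1)))).symm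
    (fun f => (A (fun j => (f j).1) * (if ∀ j, j ∈ (f j).2 then (1 : ℝ) else 0)) *
      ∫ x in region n (fun i => P (f i)), W x)]
  rw [Fintype.sum_prod_type]
  refine Finset.sum_congr rfl fun g _ => ?_
  have step : ∀ E : Fin (n+1) → Finset (Fin (n+1)),
      (A g * (if ∀ j, j ∈ E j then (1:ℝ) else 0)) *
          ∫ x in region n (fun i => P (g i, E i)), W x
        = if (∀ j, j ∈ E j) then
            A g * ∫ x in region n (fun i => P (g i, E i)), W x else 0 := by
    intro E
    split <;> simp <;> ring
  calc ∑ E : Fin (n+1) → Finset (Fin (n+1)),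
        (A g * (if ∀ j, j ∈ E j then (1:ℝ) else 0)) *
          ∫ x in region n (fun i => P (g i, E i)), W x
      = ∑ E : Fin (n+1) → Finset (Fin (n+1)),
          if (∀ j, j ∈ E j) then
            A g * ∫ x in region n (fun i => P (g i, E i)), W x else 0 :=
        Finset.sum_congr rfl fun E _ => step E
    _ = ∑ E ∈ Finset.univ.filter
          (fun E : Fin (n+1) → Finset (Fin (n+1)) => ∀ j, j ∈ E j),
          A g * ∫ x in region n (fun i => P (g i, E i)), W x :=
        (Finset.sum_filter _ _).symm
    _ = A g * ∑ E ∈ Finset.univ.filter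
          (fun E : Fin (n+1) → Finset (Fin (n+1)) => ∀ j, j ∈ E j),
          ∫ x in region n (fun i => P (g i, E i)), W x := by
        rw [Finset.mul_sum]
    _ = A g * ∫ x in region n (fun i => SS n t P i ∩ QQ n t P (g i)), W x := by
        rw [sumE P hPm hPd hWm hM g _ ?_]
        intro i
        rw [SS, QQ, biUnion_inter_biUnion hPd]
        ext z
        simp only [Set.mem_iUnion, exists_prop, Finset.mem_inter, Finset.mem_filter,
          Finset.mem_univ, true_and]
        tauto

end
section
open MeasureTheory
open scoped Classical ENNReal
variable {n : ℕ}

lemma region_eq_empty {R : Fin (n+1) → Set (Jdx n → ℝ)} (i : Fin (n+1))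
    (h : R i = ∅) : region n R = ∅ := by
  refine Set.eq_empty_of_forall_notMem fun x hx => ?_
  have := hx.2
  rw [Set.mem_iInter] at this
  have := this i
  rw [h] at this
  exact this

/-- Key construction for the `≥` direction. -/
lemma key2 {t k s : ℕ} (hs : s ≤ t) (hs0 : 0 < s)
    {W : (Idx n → ℝ) → ℝ} (hWm : Measurable W)
    (y : Fin k → ℝ) (hy : Function.Injective y) (hval : ∀ x, ∃ α, W x = y α)
    {M : ℝ} (hM : ∀ x, |W x| ≤ M)
    (Q : Fin s → Set (Jdx n → ℝ)) (hQ : IsSymPartition n Q)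
    (S : Fin (n+1) → Set (Jdx n → ℝ))
    (hSm : ∀ i, MeasurableSet (S i)) (hSs : ∀ i, SymSet n n (S i)) :
    ∃ A : (Fin (n+1) → Fin t) → ℝ, (∀ v, A v = 1 ∨ A v = -1) ∧
      ∃ P : Fin t × Finset (Fin (n+1)) → Set (Jdx n → ℝ), IsSymPartition n P ∧
        genEnergy n k (fun α x => if W x = y α then (1:ℝ) else 0)
          (fun α p => y α * A (fun j => (p j).1) *
            (if ∀ j, j ∈ (p j).2 then (1:ℝ) else 0)) P
        = ∑ j : Fin (n+1) → Fin s,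
            |∫ x in region n (fun i => S i ∩ Q (j i)), W x| := by
  set T : Finset (Fin (n+1)) → Fin (n+1) → Set (Jdx n → ℝ) :=
    fun E i => if i ∈ E then S i else (S i)ᶜ with hT
  set P : Fin t × Finset (Fin (n+1)) → Set (Jdx n → ℝ) :=
    fun c => if h : (c.1 : ℕ) < s then Q ⟨c.1, h⟩ ∩ ⋂ i, T c.2 i else ∅ with hPdef
  set ε : (Fin (n+1) → Fin s) → ℝ := fun j =>
    if 0 ≤ ∫ x in region n (fun i => S i ∩ Q (j i)), W x then 1 else -1 with hε
  set A : (Fin (n+1) → Fin t) → ℝ := fun g =>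
    if h : ∀ i, ((g i : ℕ) < s) then ε (fun i => ⟨g i, h i⟩) else 1 with hA
  -- basic facts about T
  have hTmem : ∀ (z : Jdx n → ℝ) (E : Finset (Fin (n+1))),
      (E = Finset.univ.filter fun i => z ∈ S i) → z ∈ ⋂ i, T E i := by
    intro z E hE
    rw [Set.mem_iInter]
    intro i
    by_cases hz : z ∈ S i
    · have : i ∈ E := by rw [hE]; simp [hz]
      simp only [hT, if_pos this]
      exact hz
    · have : i ∉ E := by rw [hE]; simp [hz]
      simp only [hT, if_neg this]
      exact hz
  -- measurability of P
  have hPm : ∀ c, MeasurableSet (P c) := by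
    intro c
    rw [hPdef]
    dsimp only
    split
    · refine (hQ.meas _).inter (MeasurableSet.iInter fun i => ?_)
      simp only [hT]
      split
      · exact hSm i
      · exact (hSm i).compl
    · exact MeasurableSet.empty
  -- disjointness of P
  have hPd : ∀ c c', c ≠ c' → Disjoint (P c) (P c') := by
    intro c c' hne
    by_cases h : (c.1 : ℕ) < s
    · by_cases h' : (c'.1 : ℕ) < s
      · by_cases hfst : c.1 = c'.1
        · have hsnd : c.2 ≠ c'.2 := fun hE => hne (Prod.ext hfst hE)
          have : ∃ i, ¬(i ∈ c.2 ↔ i ∈ c'.2) := by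
            by_contra hh
            push_neg at hh
            exact hsnd (Finset.ext fun i => hh i)
          obtain ⟨i, hi⟩ := this
          have hdisj : Disjoint (T c.2 i) (T c'.2 i) := by
            by_cases hic : i ∈ c.2
            · have hic' : i ∉ c'.2 := fun hh => hi ⟨fun _ => hh, fun _ => hic⟩
              simp only [hT, if_pos hic, if_neg hic']
              exact disjoint_compl_right
            · have hic' : i ∈ c'.2 := by
                by_contra hh
                exact hi ⟨fun h1 => absurd h1 hic, fun h1 => absurd h1 hh⟩
              simp only [hT, if_neg hic, if_pos hic']
              exact disjoint_compl_left
          refine Disjoint.mono ?_ ?_ hdisj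
          · rw [hPdef]; dsimp only; rw [dif_pos h]
            exact Set.inter_subset_right.trans (Set.iInter_subset _ i)
          · rw [hPdef]; dsimp only; rw [dif_pos h']
            exact Set.inter_subset_right.trans (Set.iInter_subset _ i)
        · have : (⟨c.1, h⟩ : Fin s) ≠ ⟨c'.1, h'⟩ := by
            intro hh
            apply hfst
            have := congrArg Fin.val hh
            exact Fin.ext this
          refine Disjoint.mono ?_ ?_ (hQ.disj _ _ this)
          · rw [hPdef]; dsimp only; rw [dif_pos h]
            exact Set.inter_subset_left
          · rw [hPdef]; dsimp only; rw [dif_pos h']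
            exact Set.inter_subset_left
      · have : P c' = ∅ := by rw [hPdef]; dsimp only; rw [dif_neg h']
        rw [this]
        exact Set.disjoint_empty _
    · have : P c = ∅ := by rw [hPdef]; dsimp only; rw [dif_neg h]
      rw [this]
      exact Set.empty_disjoint _
  -- symmetry of P
  have hPsym : ∀ c, SymSet n n (P c) := by
    intro c
    rw [hPdef]
    dsimp only
    split
    · refine SymSet.inter (hQ.symm _) (SymSet.iInter fun i => ?_)
      simp only [hT]
      split
      · exact hSs i
      · exact (hSs i).compl
    · exact SymSet.empty
  -- cover
  have hPcov : box n n ⊆ ⋃ c, P c := by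
    intro z hz
    obtain ⟨j, hj⟩ := Set.mem_iUnion.1 (hQ.cover hz)
    refine Set.mem_iUnion.2 ⟨(⟨(j : ℕ), lt_of_lt_of_le j.isLt hs⟩,
      Finset.univ.filter fun i => z ∈ S i), ?_⟩
    rw [hPdef]
    dsimp only
    rw [dif_pos (show ((⟨(j : ℕ), lt_of_lt_of_le j.isLt hs⟩ : Fin t) : ℕ) < s from j.isLt)]
    constructor
    · have hjj : (⟨((⟨(j : ℕ), lt_of_lt_of_le j.isLt hs⟩ : Fin t) : ℕ), j.isLt⟩ : Fin s) = j :=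
        Fin.ext rfl
      rw [show (⟨((⟨(j : ℕ), lt_of_lt_of_le j.isLt hs⟩ : Fin t) : ℕ), _⟩ : Fin s) = j from
        Fin.ext rfl]
      exact hj
    · exact hTmem z _ rfl
  have hP : IsSymPartition n P := ⟨hPm, hPsym, hPd, hPcov⟩
  -- QQ collapses to Q
  have hQQ : ∀ (m : Fin t) (h : (m : ℕ) < s), QQ n t P m = Q ⟨m, h⟩ := by
    intro m h
    apply Set.Subset.antisymm
    · intro z hz
      simp only [QQ, Set.mem_iUnion, exists_prop, Finset.mem_filter, Finset.mem_univ,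
        true_and] at hz
      obtain ⟨c, hc1, hzc⟩ := hz
      rw [hPdef] at hzc
      dsimp only at hzc
      rw [hc1] at hzc
      rw [dif_pos h] at hzc
      exact hzc.1
    · intro z hz
      simp only [QQ, Set.mem_iUnion, exists_prop, Finset.mem_filter, Finset.mem_univ,
        true_and]
      refine ⟨(m, Finset.univ.filter fun i => z ∈ S i), rfl, ?_⟩
      rw [hPdef]
      dsimp only
      rw [dif_pos h]
      exact ⟨hz, hTmem z _ rfl⟩
  -- SS ∩ Q collapses to S ∩ Q
  have hSSQ : ∀ (i : Fin (n+1)) (m : Fin t) (h : (m : ℕ) < s),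
      SS n t P i ∩ QQ n t P m = S i ∩ Q ⟨m, h⟩ := by
    intro i m h
    rw [hQQ m h]
    apply Set.Subset.antisymm
    · rintro z ⟨hz1, hz2⟩
      refine ⟨?_, hz2⟩
      simp only [SS, Set.mem_iUnion, exists_prop, Finset.mem_filter, Finset.mem_univ,
        true_and] at hz1
      obtain ⟨c, hc1, hzc⟩ := hz1
      rw [hPdef] at hzc
      dsimp only at hzc
      by_cases hcs : (c.1 : ℕ) < s
      · rw [dif_pos hcs] at hzc
        have := hzc.2
        rw [Set.mem_iInter] at this
        have := this i
        simp only [hT, if_pos hc1] at this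
        exact this
      · rw [dif_neg hcs] at hzc
        exact hzc.elim
    · rintro z ⟨hz1, hz2⟩
      refine ⟨?_, hz2⟩
      simp only [SS, Set.mem_iUnion, exists_prop, Finset.mem_filter, Finset.mem_univ,
        true_and]
      refine ⟨(m, Finset.univ.filter fun i' => z ∈ S i'), by simp [hz1], ?_⟩
      rw [hPdef]
      dsimp only
      rw [dif_pos h]
      exact ⟨hz2, hTmem z _ rfl⟩
  -- QQ is empty above s
  have hQQe : ∀ (m : Fin t), ¬((m : ℕ) < s) → QQ n t P m = ∅ := by
    intro m h
    refine Set.eq_empty_of_forall_notMem fun z hz => ?_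
    simp only [QQ, Set.mem_iUnion, exists_prop, Finset.mem_filter, Finset.mem_univ,
      true_and] at hz
    obtain ⟨c, hc1, hzc⟩ := hz
    rw [hPdef] at hzc
    dsimp only at hzc
    rw [hc1, dif_neg h] at hzc
    exact hzc
  refine ⟨A, ?_, P, hP, ?_⟩
  · intro v
    rw [hA]
    dsimp only
    split
    · rw [hε]
      dsimp only
      split
      · exact Or.inl rfl
      · exact Or.inr rfl
    · exact Or.inl rfl
  · rw [key1 hWm y hy hval hM A P hPm hPd]
    have hterm : ∀ g : Fin (n+1) → Fin t,
        A g * ∫ x in region n (fun i => SS n t P i ∩ QQ n t P (g i)), W x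
          = if h : ∀ i, ((g i : ℕ) < s) then
              |∫ x in region n (fun i => S i ∩ Q ⟨g i, h i⟩), W x| else 0 := by
      intro g
      by_cases h : ∀ i, ((g i : ℕ) < s)
      · rw [dif_pos h]
        have hreg : (fun i => SS n t P i ∩ QQ n t P (g i))
            = fun i => S i ∩ Q ⟨g i, h i⟩ := funext fun i => hSSQ i (g i) (h i)
        rw [hreg, hA]
        dsimp only
        rw [dif_pos h, hε]
        dsimp only
        split
        · rename_i hpos
          rw [one_mul, abs_of_nonneg hpos]
        · rename_i hneg
          push_neg at hneg
          rw [abs_of_neg hneg]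
          ring
      · rw [dif_neg h]
        push_neg at h
        obtain ⟨i, hi⟩ := h
        have : region n (fun i => SS n t P i ∩ QQ n t P (g i)) = ∅ := by
          refine region_eq_empty i ?_
          rw [hQQe (g i) (not_lt.2 hi), Set.inter_empty]
        rw [this]
        simp
    rw [Finset.sum_congr rfl fun g _ => hterm g]
    -- reindex the sum
    rw [← Finset.sum_filter_of_ne (p := fun g : Fin (n+1) → Fin t => ∀ i, ((g i : ℕ) < s))
      (fun g _ hne => by
        by_contra hh
        exact hne (dif_neg hh))]
    refine Finset.sum_nbij'
      (i := fun g => fun i : Fin (n+1) =>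
        if hh : ((g i : ℕ) < s) then (⟨g i, hh⟩ : Fin s) else ⟨0, hs0⟩)
      (j := fun jj => fun i => Fin.castLE hs (jj i)) ?_ ?_ ?_ ?_ ?_
    · intro g _
      exact Finset.mem_univ _
    · intro jj _
      simp only [Finset.mem_filter, Finset.mem_univ, true_and]
      intro i
      simp [Fin.castLE]
    · intro g hg
      simp only [Finset.mem_filter, Finset.mem_univ, true_and] at hg
      funext i
      dsimp only
      rw [dif_pos (hg i)]
      exact Fin.ext rfl
    · intro jj _
      funext i
      dsimp only
      rw [dif_pos (show ((Fin.castLE hs (jj i) : Fin t) : ℕ) < s from (jj i).isLt)]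
      exact Fin.ext rfl
    · intro g hg
      simp only [Finset.mem_filter, Finset.mem_univ, true_and] at hg
      rw [dif_pos hg]
      congr 1
      have : (fun i => S i ∩ Q ⟨g i, hg i⟩)
          = fun i => S i ∩ Q (if hh : ((g i : ℕ) < s) then (⟨g i, hh⟩ : Fin s) else ⟨0, hs0⟩) := by
        funext i
        rw [dif_pos (hg i)]
      rw [this]

end
section
open MeasureTheory
open scoped Classical ENNReal
variable {n : ℕ}

lemma trivialPartition {ι : Type} [Fintype ι] [DecidableEq ι] (c₀ : ι) :
    IsSymPartition n (fun c => if c = c₀ then box n n else (∅ : Set (Jdx n → ℝ))) := by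
  constructor
  · intro c
    split
    · exact measurableSet_box _ _
    · exact MeasurableSet.empty
  · intro c
    split
    · exact SymSet.box
    · exact SymSet.empty
  · intro c c' hne
    by_cases hc : c = c₀
    · have hc' : c' ≠ c₀ := fun h => hne (hc.trans h.symm)
      simp only [if_pos hc, if_neg hc']
      exact Set.disjoint_empty _
    · simp only [if_neg hc]
      exact Set.empty_disjoint _
  · intro z hz
    exact Set.mem_iUnion.2 ⟨c₀, by simp [hz]⟩

lemma mem_box_zero (q m : ℕ) : (fun _ => (0:ℝ)) ∈ box q m := by
  intro T _
  exact ⟨le_refl 0, zero_le_one⟩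

lemma QQ_isSymPartition {t : ℕ} (P : Fin t × Finset (Fin (n+1)) → Set (Jdx n → ℝ))
    (hP : IsSymPartition n P) : IsSymPartition n (QQ n t P) := by
  constructor
  · intro m
    exact Finset.measurableSet_biUnion _ fun c _ => hP.meas c
  · intro m
    exact SymSet.biUnion fun c _ => hP.symm c
  · intro m m' hne
    rw [Set.disjoint_iff_inter_eq_empty, QQ, QQ, biUnion_inter_biUnion hP.disj]
    refine Set.eq_empty_of_forall_notMem fun z hz => ?_
    simp only [Set.mem_iUnion, exists_prop, Finset.mem_inter, Finset.mem_filter,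
      Finset.mem_univ, true_and] at hz
    obtain ⟨c, ⟨h1, h2⟩, _⟩ := hz
    exact hne (h1 ▸ h2)
  · intro z hz
    obtain ⟨c, hc⟩ := Set.mem_iUnion.1 (hP.cover hz)
    refine Set.mem_iUnion.2 ⟨c.1, ?_⟩
    simp only [QQ, Set.mem_iUnion, exists_prop, Finset.mem_filter, Finset.mem_univ, true_and]
    exact ⟨c, rfl, hc⟩

lemma SS_meas {t : ℕ} (P : Fin t × Finset (Fin (n+1)) → Set (Jdx n → ℝ))
    (hP : IsSymPartition n P) (i : Fin (n+1)) : MeasurableSet (SS n t P i) :=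
  Finset.measurableSet_biUnion _ fun c _ => hP.meas c

lemma SS_symm {t : ℕ} (P : Fin t × Finset (Fin (n+1)) → Set (Jdx n → ℝ))
    (hP : IsSymPartition n P) (i : Fin (n+1)) : SymSet n n (SS n t P i) :=
  SymSet.biUnion fun c _ => hP.symm c

lemma genEnergy_bound {t k : ℕ} {W : (Idx n → ℝ) → ℝ} (hWm : Measurable W)
    (y : Fin k → ℝ) {M : ℝ} (hM0 : 0 ≤ M) (hMy : ∀ α, |y α| ≤ M)
    (A : (Fin (n+1) → Fin t) → ℝ) (hA : ∀ v, A v = 1 ∨ A v = -1)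
    (P : Fin t × Finset (Fin (n+1)) → Set (Jdx n → ℝ)) :
    genEnergy n k (fun α x => if W x = y α then (1:ℝ) else 0)
        (fun α p => y α * A (fun j => (p j).1) *
          (if ∀ j, j ∈ (p j).2 then (1 : ℝ) else 0)) P
      ≤ (k : ℝ) * (Fintype.card (Fin (n+1) → Fin t × Finset (Fin (n+1))) : ℝ) * M := by
  have key : ∀ (α : Fin k) (f : Fin (n+1) → Fin t × Finset (Fin (n+1))),
      (y α * A (fun j => (f j).1) * (if ∀ j, j ∈ (f j).2 then (1 : ℝ) else 0)) *
        (∫ x in box (n+1) n ∩ ⋂ i, projFun n i ⁻¹' P (f i),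
          (if W x = y α then (1:ℝ) else 0)) ≤ M := by
    intro α f
    have h1 : |(if ∀ j, j ∈ (f j).2 then (1:ℝ) else 0)| ≤ 1 := by split <;> simp
    have h2 : |A fun j => (f j).1| = 1 := by
      rcases hA (fun j => (f j).1) with h | h <;> simp [h]
    have h3 : |∫ x in region n (fun i => P (f i)),
        (if W x = y α then (1:ℝ) else 0)| ≤ 1 := by
      refine abs_setIntegral_region_le ?_ zero_le_one fun x => ?_
      · exact Measurable.ite (hWm (measurableSet_singleton _)) measurable_const
          measurable_const
      · split <;> simp
    have hJ : |y α * A (fun j => (f j).1) * (if ∀ j, j ∈ (f j).2 then (1:ℝ) else 0)| ≤ M := by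
      rw [abs_mul, abs_mul, h2, mul_one]
      calc |y α| * |(if ∀ j, j ∈ (f j).2 then (1:ℝ) else 0)| ≤ M * 1 :=
            mul_le_mul (hMy α) h1 (abs_nonneg _) hM0
        _ = M := mul_one M
    calc (y α * A (fun j => (f j).1) * (if ∀ j, j ∈ (f j).2 then (1 : ℝ) else 0)) *
          (∫ x in box (n+1) n ∩ ⋂ i, projFun n i ⁻¹' P (f i),
            (if W x = y α then (1:ℝ) else 0))
        ≤ |(y α * A (fun j => (f j).1) * (if ∀ j, j ∈ (f j).2 then (1 : ℝ) else 0)) *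
            (∫ x in box (n+1) n ∩ ⋂ i, projFun n i ⁻¹' P (f i),
              (if W x = y α then (1:ℝ) else 0))| := le_abs_self _
      _ = |y α * A (fun j => (f j).1) * (if ∀ j, j ∈ (f j).2 then (1 : ℝ) else 0)| *
            |∫ x in box (n+1) n ∩ ⋂ i, projFun n i ⁻¹' P (f i),
              (if W x = y α then (1:ℝ) else 0)| := abs_mul _ _
      _ ≤ M * 1 := mul_le_mul hJ h3 (abs_nonneg _) hM0
      _ = M := mul_one M
  calc genEnergy n k (fun α x => if W x = y α then (1:ℝ) else 0)
        (fun α p => y α * A (fun j => (p j).1) *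
          (if ∀ j, j ∈ (p j).2 then (1 : ℝ) else 0)) P
      ≤ ∑ _α : Fin k, ∑ _f : Fin (n+1) → Fin t × Finset (Fin (n+1)), M := by
        rw [genEnergy]
        exact Finset.sum_le_sum fun α _ => Finset.sum_le_sum fun f _ => key α f
    _ = (k : ℝ) * (Fintype.card (Fin (n+1) → Fin t × Finset (Fin (n+1))) : ℝ) * M := by
        simp [Finset.sum_const, Finset.card_univ, nsmul_eq_mul]
        ring

lemma sum_abs_integral_bound {s : ℕ} {W : (Idx n → ℝ) → ℝ} (hWm : Measurable W)
    {M : ℝ} (hM0 : 0 ≤ M) (hMW : ∀ x, |W x| ≤ M)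
    (R : (Fin (n+1) → Fin s) → Fin (n+1) → Set (Jdx n → ℝ)) :
    ∑ j : Fin (n+1) → Fin s, |∫ x in region n (R j), W x|
      ≤ (Fintype.card (Fin (n+1) → Fin s) : ℝ) * M := by
  calc ∑ j : Fin (n+1) → Fin s, |∫ x in region n (R j), W x|
      ≤ ∑ _j : Fin (n+1) → Fin s, M :=
        Finset.sum_le_sum fun j _ => abs_setIntegral_region_le hWm hM0 hMW
    _ = (Fintype.card (Fin (n+1) → Fin s) : ℝ) * M := by
        simp [Finset.sum_const, Finset.card_univ, nsmul_eq_mul]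

end

/-- **ground state energy reformulation of the partition-restricted cut
norm.** Let `W` be a symmetric `r`-kernel (`r = n+1`) taking the finitely many distinct
values `y₁,…,y_k`, regarded as the `k`-colored graphon `(1_{W=y_α})_α`. For `A` ranging over
`±1`-valued `r`-arrays of size `t` and `J_A^α = y_α·(A ⊗ B₀)` (with `B₀` the 0/1 array
indexed by subsets of `[r]` with `B₀(S₁,…,S_r)=1` iff `j ∈ S_j` for all `j`), the maximum of
`E_{r-1}(W,J_A)` equals the supremum of `‖W‖_{□,r,Q}` over symmetric partitions `Q` into at
most `t` classes. -/
theorem gse_eq_sup_cutPNorm (n t k : ℕ) (ht : 0 < t) (hk : 0 < k)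
    (W : (Idx n → ℝ) → ℝ) (hWm : Measurable W) (hWs : SymKernel n W)
    (y : Fin k → ℝ) (hy : Function.Injective y) (hval : ∀ x, ∃ α, W x = y α) :
    sSup {e : ℝ | ∃ A : (Fin (n+1) → Fin t) → ℝ, (∀ v, A v = 1 ∨ A v = -1) ∧
        e = gseG n (Fin t × Finset (Fin (n+1))) k
              (fun α x => if W x = y α then (1 : ℝ) else 0)
              (fun α p => y α * A (fun j => (p j).1) *
                (if ∀ j, j ∈ (p j).2 then (1 : ℝ) else 0))}
      = sSup {v : ℝ | ∃ s : ℕ, s ≤ t ∧ ∃ Q : Fin s → Set (Jdx n → ℝ),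
          IsSymPartition n Q ∧ v = cutPNorm n Q W} := by
  haveI : Nonempty (Fin k) := ⟨⟨0, hk⟩⟩
  obtain ⟨M, hM0, hMy⟩ : ∃ M : ℝ, 0 ≤ M ∧ ∀ α, |y α| ≤ M :=
    ⟨Finset.univ.sup' Finset.univ_nonempty (fun α => |y α|),
      le_trans (abs_nonneg (y (Classical.arbitrary _)))
        (Finset.le_sup' (f := fun α => |y α|) (Finset.mem_univ (Classical.arbitrary _))),
      fun α => Finset.le_sup' (f := fun α => |y α|) (Finset.mem_univ α)⟩
  have hMW : ∀ x, |W x| ≤ M := fun x => by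
    obtain ⟨α, hα⟩ := hval x; rw [hα]; exact hMy α
  -- nonemptiness of the inner energy sets
  have hESne : ∀ A : (Fin (n+1) → Fin t) → ℝ,
      {e : ℝ | ∃ P : (Fin t × Finset (Fin (n+1))) → Set (Jdx n → ℝ),
        IsSymPartition n P ∧
        e = genEnergy n k (fun α x => if W x = y α then (1 : ℝ) else 0)
              (fun α p => y α * A (fun j => (p j).1) *
                (if ∀ j, j ∈ (p j).2 then (1 : ℝ) else 0)) P}.Nonempty :=
    fun A => ⟨_, _, trivialPartition ((⟨0, ht⟩ : Fin t), (∅ : Finset (Fin (n+1)))), rfl⟩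
  -- boundedness of the inner energy sets
  have hESle : ∀ (A : (Fin (n+1) → Fin t) → ℝ), (∀ v, A v = 1 ∨ A v = -1) →
      ∀ e ∈ {e : ℝ | ∃ P : (Fin t × Finset (Fin (n+1))) → Set (Jdx n → ℝ),
        IsSymPartition n P ∧
        e = genEnergy n k (fun α x => if W x = y α then (1 : ℝ) else 0)
              (fun α p => y α * A (fun j => (p j).1) *
                (if ∀ j, j ∈ (p j).2 then (1 : ℝ) else 0)) P},
      e ≤ (k : ℝ) * (Fintype.card (Fin (n+1) → Fin t × Finset (Fin (n+1))) : ℝ) * M := by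
    rintro A hA e ⟨P, hP, rfl⟩
    exact genEnergy_bound hWm y hM0 hMy A hA P
  -- boundedness of cut-P-norm sets
  have hCSle : ∀ (s : ℕ) (Q : Fin s → Set (Jdx n → ℝ)),
      ∀ v ∈ {v : ℝ | ∃ S : Fin (n+1) → Set (Jdx n → ℝ),
        (∀ i, MeasurableSet (S i) ∧ SymSet n n (S i)) ∧
        v = ∑ j : Fin (n+1) → Fin s,
          |∫ x in box (n+1) n ∩ ⋂ i, projFun n i ⁻¹' (S i ∩ Q (j i)), W x|},
      v ≤ (Fintype.card (Fin (n+1) → Fin s) : ℝ) * M := by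
    rintro s Q v ⟨S, hS, rfl⟩
    exact sum_abs_integral_bound hWm hM0 hMW (fun j i => S i ∩ Q (j i))
  have hCSne : ∀ (s : ℕ) (Q : Fin s → Set (Jdx n → ℝ)),
      {v : ℝ | ∃ S : Fin (n+1) → Set (Jdx n → ℝ),
        (∀ i, MeasurableSet (S i) ∧ SymSet n n (S i)) ∧
        v = ∑ j : Fin (n+1) → Fin s,
          |∫ x in box (n+1) n ∩ ⋂ i, projFun n i ⁻¹' (S i ∩ Q (j i)), W x|}.Nonempty :=
    fun s Q => ⟨_, fun _ => (∅ : Set (Jdx n → ℝ)),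
      fun i => ⟨MeasurableSet.empty, SymSet.empty⟩, rfl⟩
  -- boundedness of the RHS set
  have hRHSbdd : ∀ v ∈ {v : ℝ | ∃ s : ℕ, s ≤ t ∧ ∃ Q : Fin s → Set (Jdx n → ℝ),
      IsSymPartition n Q ∧ v = cutPNorm n Q W},
      v ≤ ((t : ℝ) ^ (n+1)) * M := by
    rintro v ⟨s, hs, Q, hQ, rfl⟩
    rw [cutPNorm]
    refine csSup_le (hCSne s Q) fun w hw => le_trans (hCSle s Q w hw) ?_
    have hcard : (Fintype.card (Fin (n+1) → Fin s) : ℝ) ≤ (t : ℝ) ^ (n+1) := by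
      rw [Fintype.card_fun]
      simp only [Fintype.card_fin]
      calc ((s ^ (n+1) : ℕ) : ℝ) ≤ ((t ^ (n+1) : ℕ) : ℝ) := by
            exact_mod_cast Nat.pow_le_pow_left hs _
        _ = (t : ℝ) ^ (n+1) := by push_cast; ring
    exact mul_le_mul_of_nonneg_right hcard hM0
  apply le_antisymm
  · -- LHS ≤ RHS
    refine csSup_le ⟨_, fun _ => 1, fun v => Or.inl rfl, rfl⟩ ?_
    rintro e ⟨A, hA, rfl⟩
    rw [gseG]
    refine csSup_le (hESne A) ?_
    rintro e ⟨P, hP, rfl⟩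
    rw [key1 hWm y hy hval hMW A P hP.meas hP.disj]
    have hstep : ∑ g : Fin (n+1) → Fin t,
        A g * ∫ x in region n (fun i => SS n t P i ∩ QQ n t P (g i)), W x
        ≤ ∑ g : Fin (n+1) → Fin t,
            |∫ x in region n (fun i => SS n t P i ∩ QQ n t P (g i)), W x| :=
      Finset.sum_le_sum fun g _ => by
        rcases hA g with h | h
        · rw [h, one_mul]; exact le_abs_self _
        · rw [h, neg_one_mul]; exact neg_le_abs _
    refine le_trans hstep ?_
    have hmem1 : (∑ g : Fin (n+1) → Fin t,
        |∫ x in region n (fun i => SS n t P i ∩ QQ n t P (g i)), W x|)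
        ∈ {v : ℝ | ∃ S : Fin (n+1) → Set (Jdx n → ℝ),
          (∀ i, MeasurableSet (S i) ∧ SymSet n n (S i)) ∧
          v = ∑ j : Fin (n+1) → Fin t,
            |∫ x in box (n+1) n ∩ ⋂ i, projFun n i ⁻¹' (S i ∩ QQ n t P (j i)), W x|} :=
      ⟨SS n t P, fun i => ⟨SS_meas P hP i, SS_symm P hP i⟩, rfl⟩
    refine le_trans (le_csSup ⟨_, hCSle t (QQ n t P)⟩ hmem1) ?_
    exact le_csSup ⟨_, hRHSbdd⟩ ⟨t, le_rfl, QQ n t P, QQ_isSymPartition P hP, rfl⟩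
  · -- RHS ≤ LHS
    refine csSup_le ⟨cutPNorm n
        (fun m : Fin t => if m = ⟨0, ht⟩ then box n n else ∅) W,
      t, le_rfl, _, trivialPartition _, rfl⟩ ?_
    rintro v ⟨s, hs, Q, hQ, rfl⟩
    rw [cutPNorm]
    refine csSup_le (hCSne s Q) ?_
    rintro w ⟨S, hS, rfl⟩
    have hs0 : 0 < s := by
      have hzb := hQ.cover (mem_box_zero n n)
      obtain ⟨j, _⟩ := Set.mem_iUnion.1 hzb
      exact j.pos
    obtain ⟨A, hA, P, hP, hEq⟩ := key2 (t := t) hs hs0 hWm y hy hval hMW Q hQ S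
      (fun i => (hS i).1) (fun i => (hS i).2)
    have h1 : (∑ j : Fin (n+1) → Fin s,
        |∫ x in box (n+1) n ∩ ⋂ i, projFun n i ⁻¹' (S i ∩ Q (j i)), W x|)
        = genEnergy n k (fun α x => if W x = y α then (1 : ℝ) else 0)
            (fun α p => y α * A (fun j => (p j).1) *
              (if ∀ j, j ∈ (p j).2 then (1 : ℝ) else 0)) P := hEq.symm
    rw [h1]
    have h2 : genEnergy n k (fun α x => if W x = y α then (1 : ℝ) else 0)
            (fun α p => y α * A (fun j => (p j).1) *
              (if ∀ j, j ∈ (p j).2 then (1 : ℝ) else 0)) P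
        ≤ gseG n (Fin t × Finset (Fin (n+1))) k
            (fun α x => if W x = y α then (1 : ℝ) else 0)
            (fun α p => y α * A (fun j => (p j).1) *
              (if ∀ j, j ∈ (p j).2 then (1 : ℝ) else 0)) :=
      le_csSup ⟨_, hESle A hA⟩ ⟨P, hP, rfl⟩
    refine le_trans h2 (le_csSup ?_ ⟨A, hA, rfl⟩)
    refine ⟨(k : ℝ) * (Fintype.card (Fin (n+1) → Fin t × Finset (Fin (n+1))) : ℝ) * M, ?_⟩
    rintro e ⟨A', hA', rfl⟩
    rw [gseG]
    exact csSup_le (hESne A') (hESle A' hA')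


end NDT
end

section
/- Subgraph-density concentration for random induced subgraphs: Let F be a k-colored r-graph on m vertices and H a k-colored r-graph on at least n vertices. Then for any δ > 0, P(|t(F, G(n,H)) − t(F,H)| ≥ δ) ≤ 2·exp(−δ²n/(2m²)). -/
open scoped Classical

namespace NDT16

/-- An `r`-edge of `Fin q`: a subset of cardinality `r`. -/
def Edge (q r : ℕ) : Type := {e : Finset (Fin q) // e.card = r}

instance (q r : ℕ) : Fintype (Edge q r) := by unfold Edge; infer_instance

/-- The image of an `r`-edge under an injection of vertex sets. -/
def mapEdge {q m r : ℕ} (φ : Fin q ↪ Fin m) (e : Edge q r) : Edge m r :=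
  ⟨e.1.map φ, by rw [Finset.card_map]; exact e.2⟩

/-- The induced density `t(F,G)`: the probability that the colored `r`-graph induced by a
uniform random injection of `[q]` into the vertex set of `G` equals `F`. -/
noncomputable def tG {q m r k : ℕ} (F : Edge q r → Fin k) (G : Edge m r → Fin k) : ℝ :=
  (∑ φ : Fin q ↪ Fin m, if (∀ e : Edge q r, G (mapEdge φ e) = F e) then (1 : ℝ) else 0)
    / (Fintype.card (Fin q ↪ Fin m) : ℝ)

open Finset





/-- Finite-sum form of Hoeffding's lemma. -/
lemma hoeffding_finset {Ω : Type*} (S : Finset Ω) (x : Ω → ℝ) (c L : ℝ) (hc : 0 < c)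
    (hsum : ∑ a ∈ S, x a = 0) (hbd : ∀ a ∈ S, |x a| ≤ c) :
    ∑ a ∈ S, Real.exp (L * x a) ≤ (S.card : ℝ) * Real.exp (L ^ 2 * c ^ 2 / 2) := by
  have hc' : (2 : ℝ) * c ≠ 0 := by positivity
  have key : ∀ a ∈ S, Real.exp (L * x a) ≤
      (Real.exp (L * c) + Real.exp (-(L * c))) / 2
        + x a * ((Real.exp (L * c) - Real.exp (-(L * c))) / (2 * c)) := by
    intro a ha
    have hxa := hbd a ha
    have h1 : 0 ≤ (c + x a) / (2 * c) := by
      apply div_nonneg _ (by positivity)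
      nlinarith [abs_le.mp hxa]
    have h2 : 0 ≤ (c - x a) / (2 * c) := by
      apply div_nonneg _ (by positivity)
      nlinarith [abs_le.mp hxa]
    have h3 : (c + x a) / (2 * c) + (c - x a) / (2 * c) = 1 := by field_simp; ring
    have := convexOn_exp.2 (Set.mem_univ (L * c)) (Set.mem_univ (-(L * c))) h1 h2 h3
    simp only [smul_eq_mul] at this
    have harg : (c + x a) / (2 * c) * (L * c) + (c - x a) / (2 * c) * -(L * c) = L * x a := by
      field_simp; ring
    rw [harg] at this
    calc Real.exp (L * x a) ≤ (c + x a) / (2 * c) * Real.exp (L * c)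
          + (c - x a) / (2 * c) * Real.exp (-(L * c)) := this
      _ = (Real.exp (L * c) + Real.exp (-(L * c))) / 2
          + x a * ((Real.exp (L * c) - Real.exp (-(L * c))) / (2 * c)) := by
          field_simp; ring
  calc ∑ a ∈ S, Real.exp (L * x a)
      ≤ ∑ a ∈ S, ((Real.exp (L * c) + Real.exp (-(L * c))) / 2
        + x a * ((Real.exp (L * c) - Real.exp (-(L * c))) / (2 * c))) :=
        Finset.sum_le_sum key
    _ = (S.card : ℝ) * ((Real.exp (L * c) + Real.exp (-(L * c))) / 2) := by
        rw [Finset.sum_add_distrib, ← Finset.sum_mul, hsum]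
        simp
    _ = (S.card : ℝ) * Real.cosh (L * c) := by rw [Real.cosh_eq]
    _ ≤ (S.card : ℝ) * Real.exp (L ^ 2 * c ^ 2 / 2) := by
        apply mul_le_mul_of_nonneg_left _ (by positivity)
        have := Real.cosh_le_exp_half_sq (L * c)
        rw [mul_pow] at this
        exact this




variable {Ω K : Type*} [Fintype Ω]

/-- The class of `a` under the "key" function `κ`. -/
noncomputable def cls (κ : Ω → K) (a : Ω) : Finset Ω :=
  Finset.univ.filter (fun b => κ b = κ a)

/-- Conditional average of `f` given the key `κ`. -/
noncomputable def gavg (f : Ω → ℝ) (κ : Ω → K) (a : Ω) : ℝ :=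
  (∑ b ∈ cls κ a, f b) / ((cls κ a).card : ℝ)

lemma mem_cls_self (κ : Ω → K) (a : Ω) : a ∈ cls κ a := by
  simp [cls]

lemma mem_cls_iff {κ : Ω → K} {a b : Ω} : b ∈ cls κ a ↔ κ b = κ a := by
  simp [cls]

lemma cls_eq {κ : Ω → K} {a b : Ω} (h : κ a = κ b) : cls κ a = cls κ b := by
  simp only [cls, h]

lemma cls_card_pos (κ : Ω → K) (a : Ω) : 0 < (cls κ a).card :=
  Finset.card_pos.mpr ⟨a, mem_cls_self κ a⟩

lemma gavg_eq {f : Ω → ℝ} {κ : Ω → K} {a b : Ω} (h : κ a = κ b) :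
    gavg f κ a = gavg f κ b := by
  simp only [gavg, cls_eq h]

lemma gavg_neg (f : Ω → ℝ) (κ : Ω → K) (a : Ω) :
    gavg (fun b => -f b) κ a = - gavg f κ a := by
  simp [gavg, Finset.sum_neg_distrib, neg_div]

lemma gavg_const_class {f : Ω → ℝ} {κ : Ω → K} {a : Ω}
    (h : ∀ b ∈ cls κ a, f b = f a) : gavg f κ a = f a := by
  rw [gavg, Finset.sum_congr rfl h, Finset.sum_const]
  have := cls_card_pos κ a
  field_simp
  rw [nsmul_eq_mul]

lemma card_smul_gavg (f : Ω → ℝ) (κ : Ω → K) (a : Ω) :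
    ((cls κ a).card : ℝ) * gavg f κ a = ∑ b ∈ cls κ a, f b := by
  rw [gavg]
  have := cls_card_pos κ a
  field_simp

/-- Tower property: summing the finer conditional average over a coarser class gives
the sum of `f` over the class. -/
lemma tower (f : Ω → ℝ) (κ κ' : Ω → K)
    (href : ∀ a b : Ω, κ' a = κ' b → κ a = κ b) (a : Ω) :
    ∑ b ∈ cls κ a, gavg f κ' b = ∑ b ∈ cls κ a, f b := by
  have hsub : ∀ b ∈ cls κ a, cls κ' b ⊆ cls κ a := by
    intro b hb b' hb'
    rw [mem_cls_iff] at *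
    rw [href _ _ hb', hb]
  have hinner : ∀ b ∈ cls κ a, gavg f κ' b =
      ∑ b' ∈ cls κ a, if κ' b' = κ' b then f b' / ((cls κ' b').card : ℝ) else 0 := by
    intro b hb
    have hfe : (cls κ a).filter (fun b' => κ' b' = κ' b) = cls κ' b := by
      ext b'
      simp only [Finset.mem_filter, mem_cls_iff]
      constructor
      · rintro ⟨_, h2⟩; exact h2
      · intro h; exact ⟨(href _ _ h).trans (mem_cls_iff.1 hb), h⟩
    rw [← Finset.sum_filter, hfe]
    rw [gavg, Finset.sum_div]
    apply Finset.sum_congr rfl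
    intro b' hb'
    rw [cls_eq ((mem_cls_iff).1 hb')]
  rw [Finset.sum_congr rfl hinner, Finset.sum_comm]
  apply Finset.sum_congr rfl
  intro b' hb'
  have hfe : (cls κ a).filter (fun b => κ' b' = κ' b) = cls κ' b' := by
    ext b
    simp only [Finset.mem_filter, mem_cls_iff]
    constructor
    · rintro ⟨_, h2⟩; exact h2.symm
    · intro h
      exact ⟨(href _ _ h).trans (mem_cls_iff.1 hb'), h.symm⟩
  rw [← Finset.sum_filter, hfe, Finset.sum_const]
  have := cls_card_pos κ' b'
  rw [nsmul_eq_mul, mul_div_assoc', mul_div_cancel_left₀ _ (by exact_mod_cast this.ne')]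


variable {Ω K : Type*} [Fintype Ω]

lemma azuma_step (f : Ω → ℝ) (κ κ' : Ω → K)
    (href : ∀ a b : Ω, κ' a = κ' b → κ a = κ b)
    (c : ℝ) (hc : 0 < c)
    (hdiff : ∀ a b : Ω, κ a = κ b → |gavg f κ' a - gavg f κ' b| ≤ c)
    (L E : ℝ) :
    ∑ a : Ω, Real.exp (L * (gavg f κ' a - E)) ≤
      Real.exp (L ^ 2 * c ^ 2 / 2) * ∑ a : Ω, Real.exp (L * (gavg f κ a - E)) := by
  rw [← Finset.sum_fiberwise_of_maps_to
      (fun x _ => Finset.mem_image_of_mem κ (Finset.mem_univ x))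
      (fun a => Real.exp (L * (gavg f κ' a - E)))]
  rw [← Finset.sum_fiberwise_of_maps_to
      (fun x _ => Finset.mem_image_of_mem κ (Finset.mem_univ x))
      (fun a => Real.exp (L * (gavg f κ a - E))), Finset.mul_sum]
  apply Finset.sum_le_sum
  intro y hy
  obtain ⟨a₀, -, ha₀⟩ := Finset.mem_image.mp hy
  have hfilter : Finset.univ.filter (fun b => κ b = y) = cls κ a₀ := by
    ext b; simp [cls, ha₀]
  rw [hfilter]
  -- x b := gavg f κ' b - gavg f κ a₀ has zero sum and is bounded by c on cls κ a₀
  have hcard : (0:ℝ) < ((cls κ a₀).card : ℝ) := by exact_mod_cast cls_card_pos κ a₀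
  have hsum0 : ∑ b ∈ cls κ a₀, (gavg f κ' b - gavg f κ a₀) = 0 := by
    rw [Finset.sum_sub_distrib, tower f κ κ' href a₀, Finset.sum_const,
      nsmul_eq_mul, ← card_smul_gavg f κ a₀, sub_self]
  have hbd : ∀ b ∈ cls κ a₀, |gavg f κ' b - gavg f κ a₀| ≤ c := by
    intro b hb
    have hκ : κ b = κ a₀ := mem_cls_iff.mp hb
    have hcls : cls κ b = cls κ a₀ := cls_eq hκ
    have hgb : gavg f κ a₀ = (∑ b' ∈ cls κ a₀, gavg f κ' b') / ((cls κ a₀).card : ℝ) := by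
      rw [tower f κ κ' href a₀, gavg]
    have : gavg f κ' b - gavg f κ a₀ =
        (∑ b' ∈ cls κ a₀, (gavg f κ' b - gavg f κ' b')) / ((cls κ a₀).card : ℝ) := by
      rw [Finset.sum_sub_distrib, Finset.sum_const, nsmul_eq_mul, hgb]
      field_simp
    rw [this, abs_div, abs_of_pos hcard, div_le_iff₀ hcard]
    calc |∑ b' ∈ cls κ a₀, (gavg f κ' b - gavg f κ' b')|
        ≤ ∑ b' ∈ cls κ a₀, |gavg f κ' b - gavg f κ' b'| := Finset.abs_sum_le_sum_abs _ _
      _ ≤ ∑ _b' ∈ cls κ a₀, c := by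
          apply Finset.sum_le_sum
          intro b' hb'
          exact hdiff b b' (hκ.trans (mem_cls_iff.mp hb').symm)
      _ = c * ((cls κ a₀).card : ℝ) := by rw [Finset.sum_const, nsmul_eq_mul]; ring
  have hhoeff := hoeffding_finset (cls κ a₀) (fun b => gavg f κ' b - gavg f κ a₀) c L hc
      hsum0 hbd
  have hsplit : ∀ b ∈ cls κ a₀, Real.exp (L * (gavg f κ' b - E)) =
      Real.exp (L * (gavg f κ a₀ - E)) * Real.exp (L * (gavg f κ' b - gavg f κ a₀)) := by
    intro b _
    rw [← Real.exp_add]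
    ring_nf
  calc ∑ b ∈ cls κ a₀, Real.exp (L * (gavg f κ' b - E))
      = Real.exp (L * (gavg f κ a₀ - E)) *
          ∑ b ∈ cls κ a₀, Real.exp (L * (gavg f κ' b - gavg f κ a₀)) := by
        rw [Finset.mul_sum]; exact Finset.sum_congr rfl hsplit
    _ ≤ Real.exp (L * (gavg f κ a₀ - E)) *
          (((cls κ a₀).card : ℝ) * Real.exp (L ^ 2 * c ^ 2 / 2)) := by
        exact mul_le_mul_of_nonneg_left hhoeff (Real.exp_nonneg _)
    _ = Real.exp (L ^ 2 * c ^ 2 / 2) * ∑ b ∈ cls κ a₀, Real.exp (L * (gavg f κ b - E)) := by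
        have : ∀ b ∈ cls κ a₀, Real.exp (L * (gavg f κ b - E)) =
            Real.exp (L * (gavg f κ a₀ - E)) := by
          intro b hb
          rw [gavg_eq (mem_cls_iff.mp hb)]
        rw [Finset.sum_congr rfl this, Finset.sum_const, nsmul_eq_mul]
        ring

lemma azuma_iter (f : Ω → ℝ) (n : ℕ) (κ : ℕ → Ω → K)
    (hrefine : ∀ i, ∀ a b : Ω, κ (i+1) a = κ (i+1) b → κ i a = κ i b)
    (c : ℝ) (hc : 0 < c)
    (hdiff : ∀ i, i < n → ∀ a b : Ω, κ i a = κ i b →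
      |gavg f (κ (i+1)) a - gavg f (κ (i+1)) b| ≤ c)
    (L E : ℝ) :
    ∑ a : Ω, Real.exp (L * (gavg f (κ n) a - E)) ≤
      Real.exp (n * (L ^ 2 * c ^ 2 / 2)) * ∑ a : Ω, Real.exp (L * (gavg f (κ 0) a - E)) := by
  induction n with
  | zero => simp
  | succ i ih =>
    have hih := ih (fun j hj a b h => hdiff j (Nat.lt_succ_of_lt hj) a b h)
    calc ∑ a : Ω, Real.exp (L * (gavg f (κ (i+1)) a - E))
        ≤ Real.exp (L ^ 2 * c ^ 2 / 2) * ∑ a : Ω, Real.exp (L * (gavg f (κ i) a - E)) :=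
          azuma_step f (κ i) (κ (i+1)) (hrefine i) c hc
            (hdiff i (Nat.lt_succ_self i)) L E
      _ ≤ Real.exp (L ^ 2 * c ^ 2 / 2) *
            (Real.exp (i * (L ^ 2 * c ^ 2 / 2)) *
              ∑ a : Ω, Real.exp (L * (gavg f (κ 0) a - E))) :=
          mul_le_mul_of_nonneg_left hih (Real.exp_nonneg _)
      _ = Real.exp ((i + 1 : ℕ) * (L ^ 2 * c ^ 2 / 2)) *
            ∑ a : Ω, Real.exp (L * (gavg f (κ 0) a - E)) := by
          rw [← mul_assoc, ← Real.exp_add]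
          congr 1
          push_cast
          ring

lemma azuma_onesided (f : Ω → ℝ) (n : ℕ) (hn : 0 < n) (κ : ℕ → Ω → K)
    (h0 : ∀ a b : Ω, κ 0 a = κ 0 b)
    (hrefine : ∀ i, ∀ a b : Ω, κ (i+1) a = κ (i+1) b → κ i a = κ i b)
    (hlast : ∀ a b : Ω, κ n a = κ n b → f a = f b)
    (c : ℝ) (hc : 0 < c)
    (hdiff : ∀ i, i < n → ∀ a b : Ω, κ i a = κ i b →
      |gavg f (κ (i+1)) a - gavg f (κ (i+1)) b| ≤ c)
    (δ : ℝ) (hδ : 0 < δ) :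
    ∑ a : Ω, (if δ ≤ f a - (∑ b : Ω, f b) / (Fintype.card Ω : ℝ) then (1:ℝ) else 0) ≤
      (Fintype.card Ω : ℝ) * Real.exp (-δ ^ 2 / (2 * n * c ^ 2)) := by
  set E : ℝ := (∑ b : Ω, f b) / (Fintype.card Ω : ℝ) with hE
  have hg0 : ∀ a : Ω, gavg f (κ 0) a = E := by
    intro a
    have : cls (κ 0) a = Finset.univ := by
      ext b; simp [cls, h0 b a]
    rw [gavg, this, hE, Finset.card_univ]
  have hgn : ∀ a : Ω, gavg f (κ n) a = f a := by
    intro a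
    exact gavg_const_class (fun b hb => hlast b a (mem_cls_iff.mp hb))
  set L : ℝ := δ / (n * c ^ 2) with hL
  have hn' : (0:ℝ) < n := by exact_mod_cast hn
  have hL0 : 0 < L := by rw [hL]; positivity
  have hpt : ∀ a : Ω, (if δ ≤ f a - E then (1:ℝ) else 0) ≤
      Real.exp (L * (f a - E) - L * δ) := by
    intro a
    split_ifs with h
    · rw [show L * (f a - E) - L * δ = L * ((f a - E) - δ) by ring]
      apply Real.one_le_exp
      have : 0 ≤ (f a - E) - δ := by linarith
      positivity
    · positivity
  calc ∑ a : Ω, (if δ ≤ f a - E then (1:ℝ) else 0)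
      ≤ ∑ a : Ω, Real.exp (L * (f a - E) - L * δ) := Finset.sum_le_sum (fun a _ => hpt a)
    _ = Real.exp (-(L * δ)) * ∑ a : Ω, Real.exp (L * (gavg f (κ n) a - E)) := by
        rw [Finset.mul_sum]
        apply Finset.sum_congr rfl
        intro a _
        rw [hgn a, ← Real.exp_add]
        ring_nf
    _ ≤ Real.exp (-(L * δ)) *
          (Real.exp (n * (L ^ 2 * c ^ 2 / 2)) *
            ∑ a : Ω, Real.exp (L * (gavg f (κ 0) a - E))) := by
        apply mul_le_mul_of_nonneg_left _ (Real.exp_nonneg _)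
        exact azuma_iter f n κ hrefine c hc hdiff L E
    _ = (Fintype.card Ω : ℝ) * Real.exp (-δ ^ 2 / (2 * n * c ^ 2)) := by
        have hsum1 : ∑ a : Ω, Real.exp (L * (gavg f (κ 0) a - E)) =
            (Fintype.card Ω : ℝ) := by
          have : ∀ a : Ω, Real.exp (L * (gavg f (κ 0) a - E)) = 1 := by
            intro a; rw [hg0 a]; simp
          rw [Finset.sum_congr rfl (fun a _ => this a), Finset.sum_const, Finset.card_univ,
            nsmul_eq_mul, mul_one]
        rw [hsum1, ← mul_assoc, ← Real.exp_add]
        have hexp : -(L * δ) + n * (L ^ 2 * c ^ 2 / 2) = -δ ^ 2 / (2 * n * c ^ 2) := by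
          rw [hL]
          field_simp
          ring
        rw [hexp]
        ring

set_option maxHeartbeats 1000000 in
lemma azuma_abs (f : Ω → ℝ) (n : ℕ) (hn : 0 < n) (κ : ℕ → Ω → K)
    (h0 : ∀ a b : Ω, κ 0 a = κ 0 b)
    (hrefine : ∀ i, ∀ a b : Ω, κ (i+1) a = κ (i+1) b → κ i a = κ i b)
    (hlast : ∀ a b : Ω, κ n a = κ n b → f a = f b)
    (c : ℝ) (hc : 0 < c)
    (hdiff : ∀ i, i < n → ∀ a b : Ω, κ i a = κ i b →
      |gavg f (κ (i+1)) a - gavg f (κ (i+1)) b| ≤ c)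
    (δ : ℝ) (hδ : 0 < δ) :
    ∑ a : Ω, (if δ ≤ |f a - (∑ b : Ω, f b) / (Fintype.card Ω : ℝ)| then (1:ℝ) else 0) ≤
      (Fintype.card Ω : ℝ) * (2 * Real.exp (-δ ^ 2 / (2 * n * c ^ 2))) := by
  have h1 := azuma_onesided f n hn κ h0 hrefine hlast c hc hdiff δ hδ
  have h2 := azuma_onesided (fun a => -f a) n hn κ h0 hrefine
      (fun a b h => by simp [hlast a b h]) c hc
      (fun i hi a b h => by
        simp only [gavg_neg]
        rw [show -gavg f (κ (i+1)) a - -gavg f (κ (i+1)) b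
            = -(gavg f (κ (i+1)) a - gavg f (κ (i+1)) b) by ring, abs_neg]
        exact hdiff i hi a b h) δ hδ
  simp only [Finset.sum_neg_distrib, neg_div] at h2
  have hpt : ∀ x : ℝ, (if δ ≤ |x| then (1:ℝ) else 0) ≤
      (if δ ≤ x then (1:ℝ) else 0) + (if δ ≤ -x then (1:ℝ) else 0) := by
    intro x
    by_cases h : δ ≤ |x|
    · rw [if_pos h]
      rcases le_abs.mp h with h' | h'
      · have h0' : (0:ℝ) ≤ if δ ≤ -x then (1:ℝ) else 0 := by split_ifs <;> norm_num
        rw [if_pos h']; linarith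
      · have h0' : (0:ℝ) ≤ if δ ≤ x then (1:ℝ) else 0 := by split_ifs <;> norm_num
        rw [if_pos h']; linarith
    · rw [if_neg h]
      have h1' : (0:ℝ) ≤ if δ ≤ x then (1:ℝ) else 0 := by split_ifs <;> norm_num
      have h2' : (0:ℝ) ≤ if δ ≤ -x then (1:ℝ) else 0 := by split_ifs <;> norm_num
      linarith
  have key : ∀ a : Ω,
      (if δ ≤ |f a - (∑ b : Ω, f b) / (Fintype.card Ω : ℝ)| then (1:ℝ) else 0) ≤
      (if δ ≤ f a - (∑ b : Ω, f b) / (Fintype.card Ω : ℝ) then (1:ℝ) else 0)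
        + (if δ ≤ -f a - -((∑ b : Ω, f b) / (Fintype.card Ω : ℝ)) then (1:ℝ) else 0) := by
    intro a
    have hx := hpt (f a - (∑ b : Ω, f b) / (Fintype.card Ω : ℝ))
    rw [show -(f a - (∑ b : Ω, f b) / (Fintype.card Ω : ℝ))
        = -f a - -((∑ b : Ω, f b) / (Fintype.card Ω : ℝ)) from by ring] at hx
    exact hx
  refine le_trans (Finset.sum_le_sum fun a _ => key a) ?_
  rw [Finset.sum_add_distrib]
  refine le_trans (add_le_add h1 h2) (le_of_eq ?_)
  rw [neg_div]
  ring


lemma exists_perm_comp {q M : ℕ} (e e' : Fin q ↪ Fin M) :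
    ∃ σ : Equiv.Perm (Fin M), ∀ x, σ (e x) = e' x := by
  have hcard : Fintype.card ((Set.range e)ᶜ : Set (Fin M)) =
      Fintype.card ((Set.range e')ᶜ : Set (Fin M)) := by
    rw [Fintype.card_compl_set, Fintype.card_compl_set,
      Set.card_range_of_injective e.injective, Set.card_range_of_injective e'.injective]
  let ce : ((Set.range e)ᶜ : Set (Fin M)) ≃ ((Set.range e')ᶜ : Set (Fin M)) :=
    Fintype.equivOfCardEq hcard
  let re : (Set.range e : Set (Fin M)) ≃ (Set.range e' : Set (Fin M)) :=
    (Equiv.ofInjective e e.injective).symm.trans (Equiv.ofInjective e' e'.injective)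
  refine ⟨(Equiv.Set.sumCompl (Set.range e)).symm.trans
      ((Equiv.sumCongr re ce).trans (Equiv.Set.sumCompl (Set.range e'))), fun x => ?_⟩
  simp only [Equiv.trans_apply]
  rw [Equiv.Set.sumCompl_symm_apply_of_mem (Set.mem_range_self x)]
  simp [re, Equiv.ofInjective_symm_apply]

variable {r k m s M : ℕ}

/-- Indicator that the colored graph induced along `χ` equals `F`. -/
noncomputable def ind (F : Edge m r → Fin k) (H : Edge M r → Fin k)
    (χ : Fin m ↪ Fin M) : ℝ :=
  if (∀ e : Edge m r, H (mapEdge χ e) = F e) then 1 else 0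

lemma mapEdge_trans {q a b : ℕ} (ψ : Fin q ↪ Fin a) (φ : Fin a ↪ Fin b) (e : Edge q r) :
    mapEdge φ (mapEdge ψ e) = mapEdge (ψ.trans φ) e :=
  Subtype.ext (Finset.map_map _ _ _)

lemma tG_eq (F : Edge m r → Fin k) (H : Edge M r → Fin k) :
    tG F H = (∑ χ : Fin m ↪ Fin M, ind F H χ) / (Fintype.card (Fin m ↪ Fin M) : ℝ) := rfl

lemma tG_comp (F : Edge m r → Fin k) (H : Edge M r → Fin k) (φ : Fin s ↪ Fin M) :
    tG F (fun e => H (mapEdge φ e)) =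
      (∑ ψ : Fin m ↪ Fin s, ind F H (ψ.trans φ)) / (Fintype.card (Fin m ↪ Fin s) : ℝ) := by
  rw [tG]
  congr 1
  apply Finset.sum_congr rfl
  intro ψ _
  rw [ind]
  congr 1
  refine propext (forall_congr' fun e => ?_)
  rw [mapEdge_trans]

lemma ind_nonneg (F : Edge m r → Fin k) (H : Edge M r → Fin k) (χ : Fin m ↪ Fin M) :
    0 ≤ ind F H χ := by rw [ind]; split_ifs <;> norm_num

lemma card_emb_pos {a b : ℕ} (h : a ≤ b) : 0 < Fintype.card (Fin a ↪ Fin b) := by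
  rw [Fintype.card_pos_iff]
  exact ⟨(Fin.castLEEmb h)⟩

/-- The expectation over random induced subgraphs equals the global density. -/
lemma sum_tG_comp (hms : m ≤ s) (hsM : s ≤ M)
    (F : Edge m r → Fin k) (H : Edge M r → Fin k) :
    ∑ φ : Fin s ↪ Fin M, tG F (fun e => H (mapEdge φ e)) =
      (Fintype.card (Fin s ↪ Fin M) : ℝ) * tG F H := by
  classical
  set g : (Fin s ↪ Fin M) × (Fin m ↪ Fin s) → (Fin m ↪ Fin M) :=
    fun p => p.2.trans p.1 with hg
  set fib : (Fin m ↪ Fin M) → Finset ((Fin s ↪ Fin M) × (Fin m ↪ Fin s)) :=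
    fun χ => Finset.univ.filter (fun p => g p = χ) with hfib
  -- fibers all have the same cardinality
  have hconst : ∀ χ χ' : Fin m ↪ Fin M, (fib χ).card = (fib χ').card := by
    intro χ χ'
    obtain ⟨σ, hσ⟩ := exists_perm_comp χ χ'
    refine Finset.card_bij' (fun p _ => (p.1.trans σ.toEmbedding, p.2))
      (fun p _ => (p.1.trans σ.symm.toEmbedding, p.2)) ?_ ?_ ?_ ?_
    · intro p hp
      simp only [hfib, Finset.mem_filter, Finset.mem_univ, true_and, hg] at hp ⊢
      subst hp
      ext x
      exact congrArg Fin.val (hσ x)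
    · intro p hp
      simp only [hfib, Finset.mem_filter, Finset.mem_univ, true_and, hg] at hp ⊢
      ext x
      have h1 : p.1 (p.2 x) = χ' x := by rw [← hp]; rfl
      have h2 : σ.symm (p.1 (p.2 x)) = χ x := by rw [h1, ← hσ x]; simp
      exact congrArg Fin.val h2
    · intro p _
      refine Prod.ext ?_ rfl
      ext x
      simp
    · intro p _
      refine Prod.ext ?_ rfl
      ext x
      simp
  -- total count
  have htot : ∑ χ : Fin m ↪ Fin M, (fib χ).card =
      Fintype.card (Fin s ↪ Fin M) * Fintype.card (Fin m ↪ Fin s) := by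
    rw [← Fintype.card_prod, ← Finset.card_univ]
    rw [Finset.card_eq_sum_card_fiberwise (fun p _ => Finset.mem_univ (g p))]
  have hNmM : (0:ℝ) < (Fintype.card (Fin m ↪ Fin M) : ℝ) := by
    exact_mod_cast card_emb_pos (le_trans hms hsM)
  have hNms : (0:ℝ) < (Fintype.card (Fin m ↪ Fin s) : ℝ) := by
    exact_mod_cast card_emb_pos hms
  have hfibval : ∀ χ : Fin m ↪ Fin M, ((fib χ).card : ℝ) =
      (Fintype.card (Fin s ↪ Fin M) : ℝ) * (Fintype.card (Fin m ↪ Fin s) : ℝ)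
        / (Fintype.card (Fin m ↪ Fin M) : ℝ) := by
    intro χ
    have h1 : ∑ χ' : Fin m ↪ Fin M, ((fib χ').card) =
        Fintype.card (Fin m ↪ Fin M) * (fib χ).card := by
      rw [Finset.sum_congr rfl (fun χ' _ => hconst χ' χ), Finset.sum_const,
        Finset.card_univ, smul_eq_mul]
    have h2 : (Fintype.card (Fin m ↪ Fin M)) * (fib χ).card =
        Fintype.card (Fin s ↪ Fin M) * Fintype.card (Fin m ↪ Fin s) := by
      rw [← h1, htot]
    have h2' : (Fintype.card (Fin m ↪ Fin M) : ℝ) * ((fib χ).card : ℝ) =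
        (Fintype.card (Fin s ↪ Fin M) : ℝ) * (Fintype.card (Fin m ↪ Fin s) : ℝ) := by
      exact_mod_cast h2
    rw [eq_div_iff (ne_of_gt hNmM)]
    linarith [h2']
  calc ∑ φ : Fin s ↪ Fin M, tG F (fun e => H (mapEdge φ e))
      = (∑ φ : Fin s ↪ Fin M, ∑ ψ : Fin m ↪ Fin s, ind F H (ψ.trans φ))
          / (Fintype.card (Fin m ↪ Fin s) : ℝ) := by
        rw [Finset.sum_div]
        exact Finset.sum_congr rfl (fun φ _ => tG_comp F H φ)
    _ = (∑ p : (Fin s ↪ Fin M) × (Fin m ↪ Fin s), ind F H (g p))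
          / (Fintype.card (Fin m ↪ Fin s) : ℝ) := by
        rw [Fintype.sum_prod_type]
    _ = (∑ χ : Fin m ↪ Fin M, ∑ p ∈ fib χ, ind F H (g p))
          / (Fintype.card (Fin m ↪ Fin s) : ℝ) := by
        rw [Finset.sum_fiberwise_of_maps_to (fun p _ => Finset.mem_univ (g p))]
    _ = (∑ χ : Fin m ↪ Fin M, ((fib χ).card : ℝ) * ind F H χ)
          / (Fintype.card (Fin m ↪ Fin s) : ℝ) := by
        congr 1
        apply Finset.sum_congr rfl
        intro χ _
        have : ∀ p ∈ fib χ, ind F H (g p) = ind F H χ := by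
          intro p hp
          rw [(Finset.mem_filter.mp hp).2]
        rw [Finset.sum_congr rfl this, Finset.sum_const, nsmul_eq_mul]
    _ = (Fintype.card (Fin s ↪ Fin M) : ℝ) * tG F H := by
        rw [Finset.sum_congr rfl (fun χ _ => by rw [hfibval χ]), ← Finset.mul_sum,
          tG_eq]
        set A := (Fintype.card (Fin s ↪ Fin M) : ℝ) with hA
        set B := (Fintype.card (Fin m ↪ Fin s) : ℝ) with hB
        set C := (Fintype.card (Fin m ↪ Fin M) : ℝ) with hC
        set S := ∑ χ : Fin m ↪ Fin M, ind F H χ with hS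
        field_simp

/-- Counting embeddings hitting a fixed point. -/
lemma count_hit (i0 : Fin s) :
    (Finset.univ.filter (fun ψ : Fin m ↪ Fin s => ∃ p, ψ p = i0)).card * s =
      m * Fintype.card (Fin m ↪ Fin s) := by
  classical
  set cnt : Fin s → ℕ :=
    fun j => (Finset.univ.filter (fun ψ : Fin m ↪ Fin s => ∃ p, ψ p = j)).card with hcnt
  have hconst : ∀ j j' : Fin s, cnt j = cnt j' := by
    intro j j'
    apply Finset.card_nbij' (fun ψ => ψ.trans (Equiv.swap j j').toEmbedding)
      (fun ψ => ψ.trans (Equiv.swap j j').toEmbedding)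
    · intro ψ hψ
      simp only [Finset.mem_coe, Finset.mem_filter, Finset.mem_univ, true_and] at hψ ⊢
      obtain ⟨p, hp⟩ := hψ
      refine ⟨p, ?_⟩
      rw [Function.Embedding.trans_apply, Equiv.coe_toEmbedding, hp]
      exact Equiv.swap_apply_left j j'
    · intro ψ hψ
      simp only [Finset.mem_coe, Finset.mem_filter, Finset.mem_univ, true_and] at hψ ⊢
      obtain ⟨p, hp⟩ := hψ
      refine ⟨p, ?_⟩
      rw [Function.Embedding.trans_apply, Equiv.coe_toEmbedding, hp]
      exact Equiv.swap_apply_right j j'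
    · intro ψ _; ext p; simp
    · intro ψ _; ext p; simp
  have htot : ∑ j : Fin s, cnt j = Fintype.card (Fin m ↪ Fin s) * m := by
    rw [hcnt]
    have h1 : ∀ j : Fin s,
        (Finset.univ.filter (fun ψ : Fin m ↪ Fin s => ∃ p, ψ p = j)).card =
        ∑ ψ : Fin m ↪ Fin s, (if ∃ p, ψ p = j then 1 else 0) := by
      intro j
      rw [Finset.card_filter]
    simp only [h1]
    rw [Finset.sum_comm]
    have h2 : ∀ ψ : Fin m ↪ Fin s,
        ∑ j : Fin s, (if ∃ p, ψ p = j then 1 else 0) = m := by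
      intro ψ
      rw [← Finset.card_filter]
      have : Finset.univ.filter (fun j : Fin s => ∃ p, ψ p = j) = Finset.univ.map ψ := by
        ext j
        simp [Finset.mem_map, eq_comm]
      rw [this, Finset.card_map, Finset.card_univ, Fintype.card_fin]
    rw [Finset.sum_congr rfl (fun ψ _ => h2 ψ), Finset.sum_const, Finset.card_univ,
      smul_eq_mul]
  have hsum : ∑ j : Fin s, cnt j = s * cnt i0 := by
    rw [Finset.sum_congr rfl (fun j _ => hconst j i0), Finset.sum_const, Finset.card_univ,
      Fintype.card_fin, smul_eq_mul]
  show cnt i0 * s = m * Fintype.card (Fin m ↪ Fin s)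
  rw [mul_comm, ← hsum, htot]
  exact Nat.mul_comm _ _

/-- Invariance of the density sum under permutations of the sample coordinates. -/
lemma sum_ind_perm (F : Edge m r → Fin k) (H : Edge M r → Fin k)
    (φ : Fin s ↪ Fin M) (σ : Equiv.Perm (Fin s)) :
    ∑ ψ : Fin m ↪ Fin s, ind F H (ψ.trans (σ.toEmbedding.trans φ)) =
      ∑ ψ : Fin m ↪ Fin s, ind F H (ψ.trans φ) := by
  have hbij : Function.Bijective
      (fun ψ : Fin m ↪ Fin s => ψ.trans σ.toEmbedding) := by
    rw [Function.bijective_iff_has_inverse]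
    refine ⟨fun ψ => ψ.trans σ.symm.toEmbedding, fun ψ => by ext p; simp,
      fun ψ => by ext p; simp⟩
  exact Fintype.sum_bijective _ hbij _ _ (fun ψ => rfl)

/-- Swap-Lipschitz property of the induced density. -/
lemma tG_swap (hms : m ≤ s) (F : Edge m r → Fin k) (H : Edge M r → Fin k)
    (φ : Fin s ↪ Fin M) (i0 : Fin s) (b : Fin M) :
    |tG F (fun e => H (mapEdge φ e)) -
      tG F (fun e => H (mapEdge (φ.trans (Equiv.swap (φ i0) b).toEmbedding) e))| ≤
      (m : ℝ) / s := by
  classical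
  have hs0 : 0 < s := i0.pos
  have hN : (0:ℝ) < (Fintype.card (Fin m ↪ Fin s) : ℝ) := by
    exact_mod_cast card_emb_pos hms
  have hms' : (0:ℝ) ≤ (m : ℝ) / s := by positivity
  set φ' := φ.trans (Equiv.swap (φ i0) b).toEmbedding with hφ'
  by_cases hb : ∃ j₀ : Fin s, φ j₀ = b
  · -- b is in the range: the two induced graphs coincide up to a permutation
    obtain ⟨j₀, hj₀⟩ := hb
    have hperm : φ' = (Equiv.swap i0 j₀).toEmbedding.trans φ := by
      ext j
      simp only [hφ', Function.Embedding.trans_apply, Equiv.coe_toEmbedding]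
      by_cases h1 : j = i0
      · subst h1
        rw [Equiv.swap_apply_left, Equiv.swap_apply_left, hj₀]
      · by_cases h2 : j = j₀
        · subst h2
          rw [Equiv.swap_apply_right, hj₀, Equiv.swap_apply_right]
        · rw [Equiv.swap_apply_of_ne_of_ne h1 h2,
            Equiv.swap_apply_of_ne_of_ne (fun h => h1 (φ.injective h))
              (fun h => h2 (φ.injective (h.trans hj₀.symm)))]
    rw [tG_comp, tG_comp, hperm, sum_ind_perm F H φ (Equiv.swap i0 j₀)]
    simpa using hms'
  · -- b is outside the range: the graphs differ only at vertex i0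
    push_neg at hb
    rw [tG_comp, tG_comp, div_sub_div_same, ← Finset.sum_sub_distrib, abs_div,
      abs_of_pos hN, div_le_iff₀ hN]
    have hpt : ∀ ψ : Fin m ↪ Fin s,
        |ind F H (ψ.trans φ) - ind F H (ψ.trans φ')| ≤
        (if ∃ p, ψ p = i0 then (1:ℝ) else 0) := by
      intro ψ
      by_cases hhit : ∃ p, ψ p = i0
      · rw [if_pos hhit]
        rw [ind, ind]
        split_ifs <;> norm_num
      · rw [if_neg hhit]
        push_neg at hhit
        have : ψ.trans φ' = ψ.trans φ := by
          ext p
          simp only [hφ', Function.Embedding.trans_apply, Equiv.coe_toEmbedding]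
          rw [Equiv.swap_apply_of_ne_of_ne
            (fun h => (hhit p) (φ.injective h)) (fun h => hb (ψ p) h)]
        rw [this, sub_self, abs_zero]
    calc |∑ ψ : Fin m ↪ Fin s, (ind F H (ψ.trans φ) - ind F H (ψ.trans φ'))|
        ≤ ∑ ψ : Fin m ↪ Fin s, |ind F H (ψ.trans φ) - ind F H (ψ.trans φ')| :=
          Finset.abs_sum_le_sum_abs _ _
      _ ≤ ∑ ψ : Fin m ↪ Fin s, (if ∃ p, ψ p = i0 then (1:ℝ) else 0) :=
          Finset.sum_le_sum (fun ψ _ => hpt ψ)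
      _ = ((Finset.univ.filter (fun ψ : Fin m ↪ Fin s => ∃ p, ψ p = i0)).card : ℝ) := by
          rw [Finset.sum_boole]
      _ ≤ (m : ℝ) / s * (Fintype.card (Fin m ↪ Fin s) : ℝ) := by
          have hc := count_hit (m := m) i0
          have hc' : ((Finset.univ.filter
              (fun ψ : Fin m ↪ Fin s => ∃ p, ψ p = i0)).card : ℝ) * s =
              (m : ℝ) * (Fintype.card (Fin m ↪ Fin s) : ℝ) := by exact_mod_cast hc
          have hs0' : (0:ℝ) < s := by exact_mod_cast hs0
          rw [div_mul_eq_mul_div, le_div_iff₀ hs0']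
          linarith


/-- **subgraph-density concentration for random induced subgraphs.** Let `F`
be a `k`-colored `r`-graph on `m` vertices and `H` a `k`-colored `r`-graph on `M ≥ s`
vertices. For the random induced subgraph `G(s,H)` on a uniform random `s`-subset (`s ≥ m`),
`P(|t(F,G(s,H)) − t(F,H)| ≥ δ) ≤ 2·exp(−δ²s/(2m²))`. -/
theorem density_concentration (r k m s M : ℕ) (hms : m ≤ s) (hsM : s ≤ M)
    (F : Edge m r → Fin k) (H : Edge M r → Fin k) (δ : ℝ) (hδ : 0 < δ) :
    (∑ φ : Fin s ↪ Fin M,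
        if δ ≤ |tG F (fun e => H (mapEdge φ e)) - tG F H| then (1 : ℝ) else 0)
      / (Fintype.card (Fin s ↪ Fin M) : ℝ)
      ≤ 2 * Real.exp (-(δ^2 * s) / (2 * (m : ℝ)^2)) := by
  classical
  have hN : (0:ℝ) < (Fintype.card (Fin s ↪ Fin M) : ℝ) := by
    exact_mod_cast card_emb_pos hsM
  by_cases hm : m = 0
  · -- trivial case: the bound is at least 2 while the probability is at most 1
    subst hm
    have hRHS : 2 * Real.exp (-(δ^2 * (s:ℝ)) / (2 * ((0:ℕ) : ℝ)^2)) = 2 := by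
      norm_num
    rw [hRHS, div_le_iff₀ hN]
    have hle : (∑ φ : Fin s ↪ Fin M,
        if δ ≤ |tG F (fun e => H (mapEdge φ e)) - tG F H| then (1 : ℝ) else 0) ≤
        ∑ _φ : Fin s ↪ Fin M, (1:ℝ) := by
      apply Finset.sum_le_sum
      intro φ _
      split_ifs <;> norm_num
    have : ∑ _φ : Fin s ↪ Fin M, (1:ℝ) = (Fintype.card (Fin s ↪ Fin M) : ℝ) := by
      rw [Finset.sum_const, Finset.card_univ, nsmul_eq_mul, mul_one]
    nlinarith [hN]
  · have hm0 : 0 < m := Nat.pos_of_ne_zero hm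
    have hs0 : 0 < s := lt_of_lt_of_le hm0 hms
    have hs0' : ((s:ℝ)) ≠ 0 := by positivity
    have hm0' : ((m:ℝ)) ≠ 0 := by positivity
    set f : (Fin s ↪ Fin M) → ℝ := fun φ => tG F (fun e => H (mapEdge φ e)) with hf
    set κ : ℕ → (Fin s ↪ Fin M) → (Fin s → Option (Fin M)) :=
      fun i φ j => if (j : ℕ) < i then some (φ j) else none with hκ
    have h0 : ∀ a b : Fin s ↪ Fin M, κ 0 a = κ 0 b := by
      intro a b; funext j; simp [hκ]
    have hrefine : ∀ i, ∀ a b : Fin s ↪ Fin M, κ (i+1) a = κ (i+1) b → κ i a = κ i b := by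
      intro i a b h
      funext j
      have hj := congrFun h j
      by_cases hcase : (j:ℕ) < i
      · have h1 : (j:ℕ) < i + 1 := Nat.lt_succ_of_lt hcase
        simp only [hκ, if_pos hcase, if_pos h1] at hj ⊢
        exact hj
      · simp [hκ, hcase]
    have hlast : ∀ a b : Fin s ↪ Fin M, κ s a = κ s b → f a = f b := by
      intro a b h
      have hab : a = b := by
        ext j
        have hj := congrFun h j
        simp only [hκ, if_pos j.isLt] at hj
        exact congrArg Fin.val (Option.some.inj hj)
      rw [hab]
    -- the key bounded-differences estimate
    have hdiff : ∀ i, i < s → ∀ a b : Fin s ↪ Fin M, κ i a = κ i b →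
        |gavg f (κ (i+1)) a - gavg f (κ (i+1)) b| ≤ (m:ℝ)/s := by
      intro i hi a b hab
      set ii : Fin s := ⟨i, hi⟩ with hii
      set τ : Equiv.Perm (Fin M) := Equiv.swap (a ii) (b ii) with hτ
      have hagree : ∀ j : Fin s, (j:ℕ) < i → a j = b j := by
        intro j hj
        have hj' := congrFun hab j
        simp only [hκ, if_pos hj] at hj'
        exact Option.some.inj hj'
      -- transport of (i+1)-classes by the swap
      have key : ∀ (u v : Fin s ↪ Fin M), (∀ j : Fin s, (j:ℕ) < i → u j = v j) →
          ∀ w : Fin s ↪ Fin M, κ (i+1) w = κ (i+1) u →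
          κ (i+1) (w.trans (Equiv.swap (u ii) (v ii)).toEmbedding) = κ (i+1) v := by
        intro u v huv w hw
        funext j
        have hwj := congrFun hw j
        by_cases hj : (j:ℕ) < i + 1
        · simp only [hκ, if_pos hj] at hwj ⊢
          have hwju : w j = u j := Option.some.inj hwj
          rw [Function.Embedding.trans_apply, Equiv.coe_toEmbedding, hwju]
          by_cases hji : (j:ℕ) < i
          · have hjii : j ≠ ii := by
              intro hh
              rw [hh] at hji
              simp [hii] at hji
            have h1 : u j ≠ u ii := fun hh => hjii (u.injective hh)
            have h2 : u j ≠ v ii := by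
              rw [huv j hji]
              exact fun hh => hjii (v.injective hh)
            rw [Equiv.swap_apply_of_ne_of_ne h1 h2, huv j hji]
          · have hjii : j = ii := by
              apply Fin.ext
              simp only [hii]
              omega
            rw [hjii, Equiv.swap_apply_left]
        · simp only [hκ, if_neg hj]
      have hmap1 : ∀ w ∈ cls (κ (i+1)) a, w.trans τ.toEmbedding ∈ cls (κ (i+1)) b := by
        intro w hw
        exact mem_cls_iff.mpr (key a b hagree w (mem_cls_iff.mp hw))
      have hmap2 : ∀ w ∈ cls (κ (i+1)) b, w.trans τ.toEmbedding ∈ cls (κ (i+1)) a := by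
        intro w hw
        have hkey := key b a (fun j hj => (hagree j hj).symm) w (mem_cls_iff.mp hw)
        rw [show Equiv.swap (b ii) (a ii) = τ from Equiv.swap_comm _ _] at hkey
        exact mem_cls_iff.mpr hkey
      have hinv : ∀ w : Fin s ↪ Fin M, (w.trans τ.toEmbedding).trans τ.toEmbedding = w := by
        intro w
        ext p
        simp [hτ]
      have hcard : (cls (κ (i+1)) a).card = (cls (κ (i+1)) b).card :=
        Finset.card_nbij' (fun w => w.trans τ.toEmbedding) (fun w => w.trans τ.toEmbedding)
          hmap1 hmap2 (fun w _ => hinv w) (fun w _ => hinv w)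
      have hsum : ∑ w ∈ cls (κ (i+1)) a, f (w.trans τ.toEmbedding) =
          ∑ w ∈ cls (κ (i+1)) b, f w :=
        Finset.sum_nbij' (fun w => w.trans τ.toEmbedding) (fun w => w.trans τ.toEmbedding)
          hmap1 hmap2 (fun w _ => hinv w) (fun w _ => hinv w) (fun w _ => rfl)
      have hpt : ∀ w ∈ cls (κ (i+1)) a, |f w - f (w.trans τ.toEmbedding)| ≤ (m:ℝ)/s := by
        intro w hw
        have hwii : w ii = a ii := by
          have h1 := congrFun (mem_cls_iff.mp hw) ii
          have h2 : ((ii : Fin s) : ℕ) < i + 1 := by simp [hii]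
          simp only [hκ, if_pos h2] at h1
          exact Option.some.inj h1
        have hts := tG_swap hms F H w ii (b ii)
        rw [hwii] at hts
        exact hts
      have hcls_pos : (0:ℝ) < ((cls (κ (i+1)) a).card : ℝ) := by
        exact_mod_cast cls_card_pos _ _
      rw [gavg, gavg, ← hcard, ← hsum, div_sub_div_same, ← Finset.sum_sub_distrib,
        abs_div, abs_of_pos hcls_pos, div_le_iff₀ hcls_pos]
      calc |∑ w ∈ cls (κ (i+1)) a, (f w - f (w.trans τ.toEmbedding))|
          ≤ ∑ w ∈ cls (κ (i+1)) a, |f w - f (w.trans τ.toEmbedding)| :=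
            Finset.abs_sum_le_sum_abs _ _
        _ ≤ ∑ _w ∈ cls (κ (i+1)) a, (m:ℝ)/s := Finset.sum_le_sum hpt
        _ = (m:ℝ)/s * ((cls (κ (i+1)) a).card : ℝ) := by
            rw [Finset.sum_const, nsmul_eq_mul]; ring
    have hc : (0:ℝ) < (m:ℝ)/s := by positivity
    have hmain := azuma_abs f s hs0 κ h0 hrefine hlast ((m:ℝ)/s) hc hdiff δ hδ
    have hmean : (∑ b : Fin s ↪ Fin M, f b) / (Fintype.card (Fin s ↪ Fin M) : ℝ) =
        tG F H := by
      rw [hf, sum_tG_comp hms hsM F H]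
      exact mul_div_cancel_left₀ _ (ne_of_gt hN)
    simp only [hmean] at hmain
    have hexp : -δ^2 / (2 * (s:ℝ) * ((m:ℝ)/s)^2) = -(δ^2 * (s:ℝ)) / (2 * (m:ℝ)^2) := by
      field_simp
    rw [hexp] at hmain
    rw [div_le_iff₀ hN]
    refine le_trans hmain (le_of_eq (by ring))

end NDT16
end
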